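/- arXiv:hep-th/9308132 — 3 statements merged into one kernel-verified Lean document; each statement's English description precedes it below -/
import Mathlib

section
/- For every 0 ≤ k ≤ n, the Grassmann Fourier transform satisfies 𝓕(ψ^1 ∧ … ∧ ψ^k) = i^{n² − k²} ψ̄_{k+1} ∧ … ∧ ψ̄_n (for k = n the right-hand side is i^0 · 1 = 1). -/
set_option maxHeartbeats 1000000
set_option synthInstance.maxHeartbeats 1000000

/-!
STATEMENT 6.  Context: `V` is an `n`-dimensional complex vector space; the
ℤ₂-graded tensor product `Λ(V*) ⊗ Λ(V)` is realized as the exterior algebra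
`Egr n = Λ(V* ⊕ V)`, with generators `psb a = ψ̄_a` (from `Λ(V*)`) and
`psv a = ψ^a` (from `Λ(V)`).  `Ber` is the Berezin integral `∫dψ` over the
`ψ`-variables: the linear map characterized by `∫dψ (ξ · ψ^1⋯ψ^n) = ξ` for `ξ` in
the `ψ̄`-subalgebra and `∫dψ (ξ · y) = 0` when `y` has `ψ`-degree `k < n`.
The Grassmann Fourier transform is `𝓕(η) = ∫dψ (η · e^{i ψ̄_j ψ^j})`, where the
exponential series (`fourierKernel`) terminates at the `n`-th power.

Conclusion: for every `0 ≤ k ≤ n`,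
`𝓕(ψ^1 ∧ … ∧ ψ^k) = i^{n² − k²} ψ̄_{k+1} ∧ … ∧ ψ̄_n`.
-/

open Finset

noncomputable section

/-- `Λ(V* ⊕ V)`, a model of the ℤ₂-graded tensor product `Λ(V*) ⊗ Λ(V)`. -/
abbrev Egr (n : ℕ) := ExteriorAlgebra ℂ ((Fin n → ℂ) × (Fin n → ℂ))

/-- The generators `ψ^a` of the `Λ(V)` factor. -/
def psv (n : ℕ) (a : Fin n) : Egr n := ExteriorAlgebra.ι ℂ (0, Pi.single a 1)

/-- The generators `ψ̄_a` of the `Λ(V*)` factor. -/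
def psb (n : ℕ) (a : Fin n) : Egr n := ExteriorAlgebra.ι ℂ (Pi.single a 1, 0)

/-- The top monomial `ψ^1 ∧ … ∧ ψ^n`. -/
def psvTop (n : ℕ) : Egr n := ((List.finRange n).map (psv n)).prod

/-- The subalgebra `Λ(V*) ⊆ Λ(V* ⊕ V)`. -/
def AlgD (n : ℕ) : Subalgebra ℂ (Egr n) := Algebra.adjoin ℂ (Set.range (psb n))

/-- The subspace `Λ¹(V) ⊆ Λ(V* ⊕ V)`; `(PV n) ^ k` is `Λ^k(V)`. -/
def PV (n : ℕ) : Submodule ℂ (Egr n) := Submodule.span ℂ (Set.range (psv n))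

/-- The Fourier kernel `e^{i ψ̄_j ⊗ ψ^j}`; the series terminates at the n-th power. -/
def fourierKernel (n : ℕ) : Egr n :=
  ∑ m ∈ range (n + 1),
    ((Nat.factorial m : ℂ))⁻¹ • (Complex.I • ∑ j, psb n j * psv n j) ^ m

/-- `ψ^1 ∧ … ∧ ψ^k` (the first `k` generators of `Λ(V)`, in increasing order). -/
def lowMon (n k : ℕ) : Egr n :=
  (((List.finRange n).filter fun a : Fin n => decide ((a : ℕ) < k)).map (psv n)).prod

/-- `ψ̄_{k+1} ∧ … ∧ ψ̄_n` (the last `n − k` generators of `Λ(V*)`). -/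
def highBarMon (n k : ℕ) : Egr n :=
  (((List.finRange n).filter fun a : Fin n => decide (k ≤ (a : ℕ))).map (psb n)).prod

-- ===================== auxiliary development =====================
namespace Stmt6

variable {n : ℕ}

lemma gen_anti (u v : (Fin n → ℂ) × (Fin n → ℂ)) :
    ExteriorAlgebra.ι ℂ u * ExteriorAlgebra.ι ℂ v
      = -(ExteriorAlgebra.ι ℂ v * ExteriorAlgebra.ι ℂ u) :=
  eq_neg_of_add_eq_zero_left (ExteriorAlgebra.ι_add_mul_swap u v)

lemma psv_anti (a b : Fin n) : psv n a * psv n b = -(psv n b * psv n a) := by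
  unfold psv; exact gen_anti _ _

lemma psb_anti (a b : Fin n) : psb n a * psb n b = -(psb n b * psb n a) := by
  unfold psb; exact gen_anti _ _

lemma psb_psv_anti (a b : Fin n) : psb n a * psv n b = -(psv n b * psb n a) := by
  unfold psb psv; exact gen_anti _ _

lemma psv_psb_anti (a b : Fin n) : psv n a * psb n b = -(psb n b * psv n a) := by
  unfold psb psv; exact gen_anti _ _

lemma psv_sq (a : Fin n) : psv n a * psv n a = 0 := by
  unfold psv; exact ExteriorAlgebra.ι_sq_zero _

lemma psb_sq (a : Fin n) : psb n a * psb n a = 0 := by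
  unfold psb; exact ExteriorAlgebra.ι_sq_zero _

lemma prod_mul_anti (x : Egr n) : ∀ (l : List (Egr n)), (∀ y ∈ l, y * x = -(x * y)) →
    l.prod * x = ((-1 : ℂ) ^ l.length) • (x * l.prod)
  | [], _ => by simp
  | y :: l, h => by
    have hy := h y List.mem_cons_self
    have ih := prod_mul_anti x l (fun z hz => h z (List.mem_cons_of_mem _ hz))
    rw [List.prod_cons, List.length_cons, mul_assoc, ih, mul_smul_comm, ← mul_assoc, hy,
      neg_mul, smul_neg, mul_assoc, pow_succ, mul_neg_one, neg_smul]

lemma mul_prod_anti (x : Egr n) (l : List (Egr n)) (h : ∀ y ∈ l, y * x = -(x * y)) :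
    x * l.prod = ((-1 : ℂ) ^ l.length) • (l.prod * x) := by
  rw [prod_mul_anti x l h, smul_smul, ← pow_add,
    Even.neg_one_pow ⟨l.length, rfl⟩, one_smul]

lemma move_gen (x z : Egr n) (l : List (Egr n)) (h : ∀ y ∈ l, y * x = -(x * y)) :
    x * (l.prod * z) = ((-1 : ℂ) ^ l.length) • (l.prod * (x * z)) := by
  rw [← mul_assoc, mul_prod_anti x l h, smul_mul_assoc, mul_assoc]

/-- `ψ̄_a ψ^a` is central. -/
lemma c_central (a : Fin n) (x : Egr n) :
    x * (psb n a * psv n a) = (psb n a * psv n a) * x := by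
  induction x using ExteriorAlgebra.induction with
  | algebraMap r => rw [← Algebra.commutes]
  | ι v =>
      show ExteriorAlgebra.ι ℂ v * _ = _
      unfold psb psv
      rw [← mul_assoc, gen_anti v, neg_mul, mul_assoc, gen_anti v, mul_neg, neg_neg,
        ← mul_assoc]
  | mul x y hx hy => rw [mul_assoc, hy, ← mul_assoc, hx, mul_assoc]
  | add x y hx hy => rw [add_mul, hx, hy, mul_add]

/-- `ψ̄_a ψ^a` as an element of the center. -/
def Cc (n : ℕ) (a : Fin n) : Subalgebra.center ℂ (Egr n) :=
  ⟨psb n a * psv n a, Subalgebra.mem_center_iff.mpr fun b => c_central a b⟩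

lemma c_sq (a : Fin n) : (psb n a * psv n a) * (psb n a * psv n a) = 0 := by
  rw [mul_assoc, ← mul_assoc (psv n a), psv_psb_anti, neg_mul, mul_neg, ← mul_assoc,
    ← mul_assoc, psb_sq, zero_mul, zero_mul, neg_zero]

lemma Cc_sq (a : Fin n) : Cc n a * Cc n a = 0 := by
  apply Subtype.ext
  show (psb n a * psv n a) * (psb n a * psv n a) = 0
  exact c_sq a


-- coercion helpers for the center
lemma coe_mul' (x y : Subalgebra.center ℂ (Egr n)) :
    ((x * y : Subalgebra.center ℂ (Egr n)) : Egr n) = (x : Egr n) * (y : Egr n) := rfl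

lemma coe_pow' (x : Subalgebra.center ℂ (Egr n)) (m : ℕ) :
    ((x ^ m : Subalgebra.center ℂ (Egr n)) : Egr n) = (x : Egr n) ^ m := by
  exact SubmonoidClass.coe_pow x m

lemma coe_sum' {α : Type*} (s : Finset α) (f : α → Subalgebra.center ℂ (Egr n)) :
    ((∑ j ∈ s, f j : Subalgebra.center ℂ (Egr n)) : Egr n)
      = ∑ j ∈ s, ((f j : Subalgebra.center ℂ (Egr n)) : Egr n) := by
  exact map_sum ((Subalgebra.center ℂ (Egr n)).val) f s

lemma coe_natCast' (m : ℕ) :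
    (((m : ℕ) : Subalgebra.center ℂ (Egr n)) : Egr n) = ((m : ℕ) : Egr n) := by
  exact map_natCast ((Subalgebra.center ℂ (Egr n)).val) m

lemma coe_listprod' (l : List (Subalgebra.center ℂ (Egr n))) :
    ((l.prod : Subalgebra.center ℂ (Egr n)) : Egr n)
      = (l.map ((Subalgebra.center ℂ (Egr n)).val)).prod := by
  exact map_list_prod ((Subalgebra.center ℂ (Egr n)).val) l

-- ===================== list combinatorics =====================

lemma filter_range_lt {k m : ℕ} (h : k ≤ m) :
    (List.range m).filter (fun a => decide (a < k)) = List.range k := by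
  induction m with
  | zero => simp [Nat.le_zero.mp h]
  | succ m ih =>
    rcases Nat.lt_or_ge k (m + 1) with h1 | h1
    · have hk : k ≤ m := Nat.lt_succ_iff.mp h1
      rw [List.range_succ, List.filter_append, ih hk]
      have : (List.filter (fun a => decide (a < k)) [m]) = [] := by
        simp [Nat.not_lt.mpr hk]
      rw [this, List.append_nil]
    · have hk : k = m + 1 := le_antisymm h h1
      subst hk
      rw [List.filter_eq_self.mpr]
      intro a ha
      simpa using List.mem_range.mp ha

lemma filter_range_ge (k m : ℕ) :
    (List.range m).filter (fun a => decide (k ≤ a)) = List.range' k (m - k) := by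
  induction m with
  | zero => simp
  | succ m ih =>
    rw [List.range_succ, List.filter_append, ih]
    by_cases h : k ≤ m
    · have h2 : m + 1 - k = (m - k) + 1 := by omega
      have h3 : k + 1 * (m - k) = m := by omega
      rw [h2, List.range'_concat, h3]
      simp [h]
    · have h0 : m - k = 0 := by omega
      have h0' : m + 1 - k = 0 := by omega
      simp [h, h0, h0']

/-- first `k` indices, as a list of `Fin n`. -/
def lowL (n k : ℕ) : List (Fin n) :=
  (List.finRange n).filter fun a : Fin n => decide ((a : ℕ) < k)

/-- indices `≥ k`, as a list of `Fin n`. -/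
def highL (n k : ℕ) : List (Fin n) :=
  (List.finRange n).filter fun a : Fin n => decide (k ≤ (a : ℕ))

lemma lowMon_eq (k : ℕ) : lowMon n k = ((lowL n k).map (psv n)).prod := rfl

lemma highBarMon_eq (k : ℕ) : highBarMon n k = ((highL n k).map (psb n)).prod := rfl

lemma lowL_map_val {k : ℕ} (h : k ≤ n) :
    (lowL n k).map Fin.val = List.range k := by
  unfold lowL
  rw [show (fun a : Fin n => decide ((a : ℕ) < k))
      = ((fun a => decide (a < k)) ∘ Fin.val) from rfl,
    ← List.filter_map, List.map_coe_finRange_eq_range, filter_range_lt h]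

lemma highL_map_val (k : ℕ) :
    (highL n k).map Fin.val = List.range' k (n - k) := by
  unfold highL
  rw [show (fun a : Fin n => decide (k ≤ (a : ℕ)))
      = ((fun a => decide (k ≤ a)) ∘ Fin.val) from rfl,
    ← List.filter_map, List.map_coe_finRange_eq_range, filter_range_ge k n]

lemma lowL_length {k : ℕ} (h : k ≤ n) : (lowL n k).length = k := by
  have := congrArg List.length (lowL_map_val (n := n) h)
  simpa using this

lemma highL_length (k : ℕ) : (highL n k).length = n - k := by
  have := congrArg List.length (highL_map_val (n := n) k)
  simpa using this

lemma highL_nodup (k : ℕ) : (highL n k).Nodup :=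
  (List.nodup_finRange n).filter _

lemma highL_cons {k : ℕ} (h : k < n) :
    highL n k = (⟨k, h⟩ : Fin n) :: highL n (k + 1) := by
  apply List.map_injective_iff.mpr Fin.val_injective
  rw [highL_map_val, List.map_cons, highL_map_val]
  have h2 : n - k = (n - (k + 1)) + 1 := by omega
  rw [h2, List.range'_succ]

lemma lowL_concat {k : ℕ} (h : k < n) :
    lowL n (k + 1) = lowL n k ++ [(⟨k, h⟩ : Fin n)] := by
  apply List.map_injective_iff.mpr Fin.val_injective
  rw [lowL_map_val (by omega), List.map_append, lowL_map_val (by omega), List.map_cons,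
    List.map_nil, List.range_succ]

lemma lowL_top : lowL n n = List.finRange n := by
  apply List.filter_eq_self.mpr
  intro a _
  simpa using a.isLt

lemma highL_top : highL n n = [] := by
  apply List.filter_eq_nil_iff.mpr
  intro a _
  simpa using a.isLt

lemma lowMon_top : lowMon n n = psvTop n := by
  rw [lowMon_eq, show lowL n n = List.finRange n from lowL_top]; rfl

lemma highBarMon_top : highBarMon n n = 1 := by
  rw [highBarMon_eq, show highL n n = ([] : List (Fin n)) from highL_top]
  simp

-- ===================== membership lemmas =====================

lemma psvL_mem_pow (l : List (Fin n)) :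
    ((l.map (psv n)).prod) ∈ ((PV n) ^ l.length : Submodule ℂ (Egr n)) := by
  induction l with
  | nil =>
      rw [List.map_nil, List.prod_nil, List.length_nil, pow_zero]
      exact Submodule.one_le.mp le_rfl
  | cons a l ih =>
      rw [List.map_cons, List.prod_cons, List.length_cons, pow_succ']
      exact Submodule.mul_mem_mul (Submodule.subset_span ⟨a, rfl⟩) ih

lemma psbL_mem_AlgD (l : List (Fin n)) : ((l.map (psb n)).prod) ∈ AlgD n := by
  apply Subalgebra.list_prod_mem
  intro x hx
  obtain ⟨a, _, rfl⟩ := List.mem_map.mp hx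
  exact Algebra.subset_adjoin ⟨a, rfl⟩

lemma highBarMon_mem (k : ℕ) : highBarMon n k ∈ AlgD n := by
  rw [highBarMon_eq]; exact psbL_mem_AlgD _

-- ===================== killing lemmas =====================

lemma lowMon_mul_psv {k : ℕ} (hk : k ≤ n) {j : Fin n} (hj : (j : ℕ) < k) :
    lowMon n k * psv n j = 0 := by
  have hjl : j ∈ lowL n k := by
    unfold lowL
    rw [List.mem_filter]
    exact ⟨List.mem_finRange j, by simpa using hj⟩
  obtain ⟨s, t, hst⟩ := List.append_of_mem hjl
  rw [lowMon_eq, hst, List.map_append, List.map_cons, List.prod_append, List.prod_cons]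
  have ht : (t.map (psv n)).prod * psv n j
      = ((-1 : ℂ) ^ (t.map (psv n)).length) • (psv n j * (t.map (psv n)).prod) := by
    apply prod_mul_anti
    intro y hy
    obtain ⟨b, _, rfl⟩ := List.mem_map.mp hy
    exact psv_anti b j
  rw [mul_assoc, mul_assoc, ht, mul_smul_comm, ← mul_assoc (psv n j), psv_sq,
    zero_mul, smul_zero, mul_zero]

lemma lowMon_mul_psb (k : ℕ) (j : Fin n) :
    lowMon n k * psb n j
      = ((-1 : ℂ) ^ ((lowL n k).map (psv n)).length) • (psb n j * lowMon n k) := by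
  rw [lowMon_eq]
  apply prod_mul_anti
  intro y hy
  obtain ⟨b, _, rfl⟩ := List.mem_map.mp hy
  exact psv_psb_anti b j

lemma lowMon_mul_c_low {k : ℕ} (hk : k ≤ n) {j : Fin n} (hj : (j : ℕ) < k) :
    lowMon n k * (psb n j * psv n j) = 0 := by
  rw [← mul_assoc, lowMon_mul_psb, smul_mul_assoc, mul_assoc, lowMon_mul_psv hk hj,
    mul_zero, smul_zero]

-- ===================== sign extraction =====================

lemma lowMon_mul_cprod (k : ℕ) : ∀ (l : List (Fin n)),
    ∃ e : ℕ, lowMon n k * (l.map (fun j => psb n j * psv n j)).prod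
      = ((-1 : ℂ) ^ e) • ((l.map (psb n)).prod * (lowMon n k * (l.map (psv n)).prod))
  | [] => ⟨0, by simp⟩
  | a :: l => by
    obtain ⟨e, he⟩ := lowMon_mul_cprod k l
    set P := (l.map (fun j => psb n j * psv n j)).prod with hP
    set Psb := (l.map (psb n)).prod with hPsb
    set Psv := (l.map (psv n)).prod with hPsv
    have hanti1 : ∀ y ∈ l.map (psb n), y * psv n a = -(psv n a * y) := by
      intro y hy
      obtain ⟨b, _, rfl⟩ := List.mem_map.mp hy
      exact psb_psv_anti b a
    have hanti2 : ∀ y ∈ (lowL n k).map (psv n), y * psv n a = -(psv n a * y) := by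
      intro y hy
      obtain ⟨b, _, rfl⟩ := List.mem_map.mp hy
      exact psv_anti b a
    refine ⟨e + (l.map (psb n)).length + ((lowL n k).map (psv n)).length, ?_⟩
    rw [List.map_cons, List.prod_cons, List.map_cons, List.prod_cons, List.map_cons,
      List.prod_cons]
    calc lowMon n k * ((psb n a * psv n a) * P)
        = (psb n a * psv n a) * (lowMon n k * P) := by
          rw [← mul_assoc, c_central a (lowMon n k), mul_assoc]
      _ = (psb n a * psv n a) * (((-1 : ℂ) ^ e) • (Psb * (lowMon n k * Psv))) := by
          rw [he]
      _ = ((-1 : ℂ) ^ e) • (psb n a * (psv n a * (Psb * (lowMon n k * Psv)))) := by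
          rw [mul_smul_comm, mul_assoc]
      _ = ((-1 : ℂ) ^ (e + (l.map (psb n)).length)) •
            (psb n a * (Psb * (psv n a * (lowMon n k * Psv)))) := by
          rw [move_gen (psv n a) _ _ hanti1, mul_smul_comm, smul_smul, ← pow_add]
      _ = ((-1 : ℂ) ^ (e + (l.map (psb n)).length + ((lowL n k).map (psv n)).length)) •
            (psb n a * (Psb * (lowMon n k * (psv n a * Psv)))) := by
          rw [show lowMon n k * Psv = ((lowL n k).map (psv n)).prod * Psv from rfl,
            ← mul_assoc (psv n a), mul_prod_anti (psv n a) _ hanti2, smul_mul_assoc,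
            mul_assoc ((lowL n k).map (psv n)).prod, mul_smul_comm, mul_smul_comm,
            smul_smul, ← pow_add]
          rfl
      _ = ((-1 : ℂ) ^ (e + (l.map (psb n)).length + ((lowL n k).map (psv n)).length)) •
            ((psb n a * Psb) * (lowMon n k * (psv n a * Psv))) := by
          rw [mul_assoc]

-- ===================== the span lemma =====================

/-- products of `m` central factors `ψ̄_j ψ^j` with all `j ≥ k` -/
def cset (n k m : ℕ) : Set (Egr n) :=
  {z | ∃ l : List (Fin n), (∀ j ∈ l, k ≤ (j : ℕ)) ∧ l.length = m ∧
    z = (l.map (fun j => psb n j * psv n j)).prod}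

lemma dh_pow_mem (k : ℕ) : ∀ m : ℕ,
    ((∑ j ∈ Finset.univ.filter (fun a : Fin n => ¬((a : ℕ) < k)),
      (psb n j * psv n j)) ^ m) ∈ Submodule.span ℂ (cset n k m)
  | 0 => by
    rw [pow_zero]
    exact Submodule.subset_span ⟨[], by simp, by simp, by simp⟩
  | (m + 1) => by
    set dh := ∑ j ∈ Finset.univ.filter (fun a : Fin n => ¬((a : ℕ) < k)),
      (psb n j * psv n j) with hdh
    have ih := dh_pow_mem k m
    have h1 : dh ^ m * dh ∈
        Submodule.map (LinearMap.mulRight ℂ dh) (Submodule.span ℂ (cset n k m)) :=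
      ⟨_, ih, rfl⟩
    rw [Submodule.map_span] at h1
    rw [pow_succ]
    refine Submodule.span_le.mpr ?_ h1
    rintro _ ⟨z, ⟨l, hl, hlen, rfl⟩, rfl⟩
    show (l.map (fun j => psb n j * psv n j)).prod * dh ∈ _
    rw [hdh, Finset.mul_sum]
    apply Submodule.sum_mem
    intro j hj
    have hkj : k ≤ (j : ℕ) := by
      have := (Finset.mem_filter.mp hj).2
      omega
    refine Submodule.subset_span ⟨l ++ [j], ?_, by simp [hlen], ?_⟩
    · intro i hi
      rcases List.mem_append.mp hi with h | h
      · exact hl i h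
      · simp at h; subst h; exact hkj
    · rw [List.map_append, List.prod_append]
      simp

-- ===================== the top-power lemma =====================

lemma top_pow (S : Finset (Fin n)) :
    (∀ m, S.card < m → (∑ j ∈ S, Cc n j) ^ m = 0) ∧
      (∑ j ∈ S, Cc n j) ^ S.card
        = ((S.card.factorial : ℕ) : Subalgebra.center ℂ (Egr n)) * ∏ j ∈ S, Cc n j := by
  induction S using Finset.induction_on with
  | empty =>
      constructor
      · intro m hm
        rw [Finset.sum_empty, zero_pow (by omega)]
      · simp
  | @insert a s ha ih =>
      obtain ⟨ih1, ih2⟩ := ih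
      have hx2 : Cc n a ^ 2 = 0 := by rw [sq]; exact Cc_sq a
      have hxp : ∀ i, 2 ≤ i → Cc n a ^ i = 0 := by
        intro i hi
        obtain ⟨d, rfl⟩ : ∃ d, i = 2 + d := ⟨i - 2, by omega⟩
        rw [pow_add, hx2, zero_mul]
      have hsum : ∑ j ∈ insert a s, Cc n j = Cc n a + ∑ j ∈ s, Cc n j :=
        Finset.sum_insert ha
      have hcard : (insert a s).card = s.card + 1 := Finset.card_insert_of_notMem ha
      constructor
      · intro m hm
        rw [hsum, add_pow]
        apply Finset.sum_eq_zero
        intro i hi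
        rcases Nat.lt_or_ge i 2 with h2 | h2
        · interval_cases i
          · rw [pow_zero, one_mul, Nat.sub_zero, ih1 m (by omega), zero_mul]
          · rw [ih1 (m - 1) (by omega), mul_zero, zero_mul]
        · rw [hxp i h2, zero_mul, zero_mul]
      · rw [hsum, hcard, add_pow]
        rw [Finset.sum_eq_single 1 ?h1 ?h2]
        · rw [pow_one, Nat.add_sub_cancel, ih2, Nat.choose_one_right,
            Finset.prod_insert ha, Nat.factorial_succ, Nat.cast_mul, Nat.cast_add,
            Nat.cast_one]
          ring
        · intro i hi hne
          rcases Nat.lt_or_ge i 2 with h2 | h2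
          · interval_cases i
            · rw [pow_zero, one_mul, Nat.sub_zero, ih1 (s.card + 1) (by omega), zero_mul]
            · exact absurd rfl hne
          · rw [hxp i h2, zero_mul, zero_mul]
        · intro h1
          exact absurd (Finset.mem_range.mpr (by omega)) h1

-- ===================== the exact top term =====================

lemma L4 (d : ℕ) : ∀ k : ℕ, k + d = n →
    lowMon n k * ((highL n k).map (fun j => psb n j * psv n j)).prod
      = ((-1 : ℂ) ^ (∑ j ∈ Finset.Ico k n, j)) • (highBarMon n k * psvTop n) := by
  induction d with
  | zero =>
      intro k hkn
      have hk : k = n := by omega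
      subst hk
      rw [highL_top, lowMon_top, highBarMon_top, List.map_nil, List.prod_nil, mul_one,
        Finset.Ico_self, Finset.sum_empty, pow_zero, one_smul, one_mul]
  | succ d ih =>
      intro k hkn
      have hkn' : k < n := by omega
      have hih := ih (k + 1) (by omega)
      rw [highL_cons hkn', List.map_cons, List.prod_cons, ← mul_assoc, ← mul_assoc,
        lowMon_mul_psb, List.length_map, lowL_length (le_of_lt hkn')]
      have hpsv : lowMon n k * psv n ⟨k, hkn'⟩ = lowMon n (k + 1) := by
        rw [lowMon_eq, lowMon_eq, lowL_concat hkn', List.map_append, List.prod_append]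
        simp
      rw [smul_mul_assoc, smul_mul_assoc, mul_assoc (psb n ⟨k, hkn'⟩), hpsv,
        mul_assoc (psb n ⟨k, hkn'⟩), hih, mul_smul_comm, smul_smul, ← pow_add]
      have hbar : highBarMon n k = psb n ⟨k, hkn'⟩ * highBarMon n (k + 1) := by
        rw [highBarMon_eq, highBarMon_eq, highL_cons hkn', List.map_cons, List.prod_cons]
      have hsumIco : (∑ j ∈ Finset.Ico k n, j) = k + ∑ j ∈ Finset.Ico (k + 1) n, j :=
        Finset.sum_eq_sum_Ico_succ_bot hkn' _
      rw [hsumIco, hbar, ← mul_assoc]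

-- ===================== scalar identity =====================

lemma scalar_id {k : ℕ} (h : k ≤ n) :
    Complex.I ^ (n - k) * (-1 : ℂ) ^ (∑ j ∈ Finset.Ico k n, j)
      = Complex.I ^ (n ^ 2 - k ^ 2) := by
  have key : ∀ d k : ℕ, (k + d) - k + 2 * (∑ j ∈ Finset.Ico k (k + d), j)
      = (k + d) ^ 2 - k ^ 2 := by
    intro d
    induction d with
    | zero => intro k; simp
    | succ d ihd =>
        intro k
        rw [show k + (d + 1) = (k + d) + 1 from rfl,
          Finset.sum_Ico_succ_top (by omega)]
        have h2 := ihd k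
        have e1 : (k + d + 1) ^ 2 = (k + d) ^ 2 + 2 * (k + d) + 1 := by ring
        have e2 : k ^ 2 ≤ (k + d) ^ 2 := Nat.pow_le_pow_left (by omega) 2
        omega
  obtain ⟨d, rfl⟩ : ∃ d, n = k + d := ⟨n - k, by omega⟩
  rw [show (-1 : ℂ) = Complex.I ^ 2 from (Complex.I_sq).symm, ← pow_mul, ← pow_add]
  congr 1
  have := key d k
  omega

end Stmt6

-- ===================== main theorem =====================

open Stmt6 in
theorem statement6 {n : ℕ} (Ber : Egr n →ₗ[ℂ] Egr n)
    (hBer_top : ∀ ξ ∈ AlgD n, Ber (ξ * psvTop n) = ξ)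
    (hBer_low : ∀ ξ ∈ AlgD n, ∀ k < n, ∀ y ∈ ((PV n) ^ k : Submodule ℂ (Egr n)),
      Ber (ξ * y) = 0)
    (k : ℕ) (hk : k ≤ n) :
    Ber (lowMon n k * fourierKernel n)
      = (Complex.I ^ (n ^ 2 - k ^ 2)) • highBarMon n k := by
  classical
  -- the center elements
  set Dl : Subalgebra.center ℂ (Egr n) :=
    ∑ j ∈ Finset.univ.filter (fun a : Fin n => ((a : ℕ) < k)), Cc n j with hDl
  set Dh : Subalgebra.center ℂ (Egr n) :=
    ∑ j ∈ Finset.univ.filter (fun a : Fin n => ¬((a : ℕ) < k)), Cc n j with hDh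
  have hDsum : Dl + Dh = ∑ j, Cc n j :=
    Finset.sum_filter_add_sum_filter_not _ _ _
  have hcoe_sum : ((∑ j, Cc n j : Subalgebra.center ℂ (Egr n)) : Egr n)
      = ∑ j, psb n j * psv n j := by
    rw [coe_sum']
    rfl
  have hd : (∑ j, psb n j * psv n j) = (((Dl + Dh : Subalgebra.center ℂ (Egr n))) : Egr n) := by
    rw [hDsum, hcoe_sum]
  -- cardinality of the high set
  have hcardHigh : (Finset.univ.filter (fun a : Fin n => ¬((a : ℕ) < k))).card = n - k := by
    have hset : Finset.univ.filter (fun a : Fin n => ¬((a : ℕ) < k))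
        = (highL n k).toFinset := by
      ext a
      simp only [Finset.mem_filter, Finset.mem_univ, true_and, List.mem_toFinset,
        highL, List.mem_filter, List.mem_finRange, decide_eq_true_eq]
      omega
    rw [hset, List.toFinset_card_of_nodup (highL_nodup k), highL_length]
  -- reduction of each power to the high part
  have hdl_zero : lowMon n k * ((Dl : Egr n)) = 0 := by
    have : ((Dl : Egr n))
        = ∑ j ∈ Finset.univ.filter (fun a : Fin n => ((a : ℕ) < k)),
            (psb n j * psv n j) := by
      rw [hDl, coe_sum']
      rfl
    rw [this, Finset.mul_sum]
    apply Finset.sum_eq_zero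
    intro j hj
    exact lowMon_mul_c_low hk (Finset.mem_filter.mp hj).2
  have hred : ∀ m : ℕ, lowMon n k * ((∑ j, psb n j * psv n j) ^ m)
      = lowMon n k * (((Dh ^ m : Subalgebra.center ℂ (Egr n))) : Egr n) := by
    intro m
    rw [hd, ← coe_pow', add_pow, coe_sum', Finset.mul_sum]
    rw [Finset.sum_eq_single 0]
    · simp
    · intro i hi hne
      obtain ⟨i', rfl⟩ : ∃ i', i = i' + 1 := ⟨i - 1, by omega⟩
      have hsplit : ((Dl ^ (i' + 1) * Dh ^ (m - (i' + 1))
            * ((m.choose (i' + 1) : ℕ) : Subalgebra.center ℂ (Egr n))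
            : Subalgebra.center ℂ (Egr n)) : Egr n)
          = (Dl : Egr n) * ((Dl ^ i' * Dh ^ (m - (i' + 1))
              * ((m.choose (i' + 1) : ℕ) : Subalgebra.center ℂ (Egr n))
              : Subalgebra.center ℂ (Egr n)) : Egr n) := by
        rw [← coe_mul']
        congr 1
        ring
      rw [hsplit, ← mul_assoc, hdl_zero, zero_mul]
    · intro h0
      exact absurd (Finset.mem_range.mpr (by omega)) h0
  -- Ber kills the low powers
  have hzero_low : ∀ m : ℕ, m < n - k →
      Ber (lowMon n k * (((Dh ^ m : Subalgebra.center ℂ (Egr n))) : Egr n)) = 0 := by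
    intro m hm
    have hmem : (((Dh ^ m : Subalgebra.center ℂ (Egr n))) : Egr n)
        ∈ Submodule.span ℂ (cset n k m) := by
      have : (((Dh ^ m : Subalgebra.center ℂ (Egr n))) : Egr n)
          = (∑ j ∈ Finset.univ.filter (fun a : Fin n => ¬((a : ℕ) < k)),
              (psb n j * psv n j)) ^ m := by
        rw [coe_pow']
        congr 1
        rw [hDh, coe_sum']
        rfl
      rw [this]
      exact dh_pow_mem k m
    set φ : Egr n →ₗ[ℂ] Egr n := Ber ∘ₗ LinearMap.mulLeft ℂ (lowMon n k) with hφ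
    have : φ (((Dh ^ m : Subalgebra.center ℂ (Egr n))) : Egr n) = 0 := by
      have hker : Submodule.span ℂ (cset n k m) ≤ LinearMap.ker φ := by
        rw [Submodule.span_le]
        rintro _ ⟨l, hl, hlen, rfl⟩
        rw [SetLike.mem_coe, LinearMap.mem_ker, hφ, LinearMap.comp_apply,
          LinearMap.mulLeft_apply]
        obtain ⟨e, he⟩ := lowMon_mul_cprod k l
        rw [he, map_smul]
        have hy : lowMon n k * (l.map (psv n)).prod
            = (((lowL n k ++ l).map (psv n)).prod) := by
          rw [List.map_append, List.prod_append, lowMon_eq]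
        have hymem : lowMon n k * (l.map (psv n)).prod
            ∈ ((PV n) ^ (k + m) : Submodule ℂ (Egr n)) := by
          rw [hy]
          have := psvL_mem_pow (n := n) (lowL n k ++ l)
          rwa [List.length_append, lowL_length hk, hlen] at this
        rw [hBer_low _ (psbL_mem_AlgD l) (k + m) (by omega) _ hymem, smul_zero]
      exact LinearMap.mem_ker.mp (hker hmem)
    rw [hφ] at this
    simpa using this
  -- main computation
  rw [fourierKernel, Finset.mul_sum, map_sum]
  rw [Finset.sum_eq_single (n - k)]
  · -- the top term
    rw [smul_pow, mul_smul_comm, mul_smul_comm, map_smul, map_smul, hred]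
    have htop : (Dh ^ (n - k) : Subalgebra.center ℂ (Egr n))
        = (((n - k).factorial : ℕ) : Subalgebra.center ℂ (Egr n))
            * ∏ j ∈ Finset.univ.filter (fun a : Fin n => ¬((a : ℕ) < k)), Cc n j := by
      have := (top_pow (Finset.univ.filter (fun a : Fin n => ¬((a : ℕ) < k)))).2
      rwa [hcardHigh] at this
    have hprod : ((∏ j ∈ Finset.univ.filter (fun a : Fin n => ¬((a : ℕ) < k)), Cc n j
        : Subalgebra.center ℂ (Egr n)) : Egr n)
        = ((highL n k).map (fun j => psb n j * psv n j)).prod := by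
      have hset : Finset.univ.filter (fun a : Fin n => ¬((a : ℕ) < k))
          = (highL n k).toFinset := by
        ext a
        simp only [Finset.mem_filter, Finset.mem_univ, true_and, List.mem_toFinset,
          highL, List.mem_filter, List.mem_finRange, decide_eq_true_eq]
        omega
      rw [hset, List.prod_toFinset _ (highL_nodup k), coe_listprod', List.map_map]
      rfl
    rw [htop, coe_mul', coe_natCast', hprod]
    have hcast : ((((n - k).factorial : ℕ)) : Egr n)
        * ((highL n k).map (fun j => psb n j * psv n j)).prod
        = (((n - k).factorial : ℂ))
            • ((highL n k).map (fun j => psb n j * psv n j)).prod := by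
      rw [Algebra.smul_def, map_natCast]
    rw [hcast, mul_smul_comm, map_smul, L4 (n - k) k (by omega), map_smul,
      hBer_top _ (highBarMon_mem k)]
    rw [smul_smul, smul_smul, smul_smul]
    congr 1
    have hfac : (((n - k).factorial : ℂ)) ≠ 0 := by
      exact_mod_cast Nat.factorial_ne_zero (n - k)
    field_simp
    rw [mul_comm]
    rw [← scalar_id hk]
    ring
  · -- other terms vanish
    intro m hm hne
    rw [smul_pow, mul_smul_comm, mul_smul_comm, map_smul, map_smul, hred]
    rcases Nat.lt_or_ge m (n - k) with hlt | hge
    · rw [hzero_low m hlt, smul_zero, smul_zero]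
    · have hgt : n - k < m := by omega
      have : (Dh ^ m : Subalgebra.center ℂ (Egr n)) = 0 := by
        have := (top_pow (Finset.univ.filter (fun a : Fin n => ¬((a : ℕ) < k)))).1 m
        rw [hcardHigh] at this
        exact this hgt
      rw [this]
      simp
  · intro h0
    exact absurd (Finset.mem_range.mpr (by omega)) h0
end
end

section
/- If n = dim V is even, then 𝓕² : Λ(V) → Λ(V) (the composite of the Grassmann Fourier transform Λ(V) → Λ(V*) with the analogous transform Λ(V*) → Λ(V)) equals the identity map. -/
/-!
STATEMENT 7.  Context: as in Statement 6, `Egr n = Λ(V* ⊕ V)` models the ℤ₂-graded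
tensor product `Λ(V*) ⊗ Λ(V)` for an `n`-dimensional complex space `V`, with
generators `psv a = ψ^a` (of `Λ(V)`) and `psb a = ψ̄_a` (of `Λ(V*)`).  `Ber` is the
Berezin integral `∫dψ` over the `ψ`'s (normalized by `∫dψ ψ^1⋯ψ^n = 1`), `BerD`
the Berezin integral `∫dψ̄` over the `ψ̄`'s (normalized by `∫dψ̄ ψ̄_1⋯ψ̄_n = 1`).
The Grassmann Fourier transform `Λ(V) → Λ(V*)` is `η ↦ ∫dψ (η · e^{i ψ̄_j ψ^j})`
and the analogous transform `Λ(V*) → Λ(V)` is `ξ ↦ ∫dψ̄ (ξ · e^{i ψ^j ψ̄_j})`.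

Conclusion: if `n` is even, then `𝓕² : Λ(V) → Λ(V)` is the identity, i.e. for every
`η` in the subalgebra `Λ(V)`, `𝓕'(𝓕(η)) = η`.
-/

open Finset

noncomputable section

/-- The top monomial `ψ̄_1 ∧ … ∧ ψ̄_n`. -/
def psbTop (n : ℕ) : Egr n := ((List.finRange n).map (psb n)).prod

/-- The subalgebra `Λ(V) ⊆ Λ(V* ⊕ V)`. -/
def AlgV (n : ℕ) : Subalgebra ℂ (Egr n) := Algebra.adjoin ℂ (Set.range (psv n))

/-- The subspace `Λ¹(V*)`; `(PD n) ^ k` is `Λ^k(V*)`. -/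
def PD (n : ℕ) : Submodule ℂ (Egr n) := Submodule.span ℂ (Set.range (psb n))

/-- The kernel `e^{i ψ^j ⊗ ψ̄_j}` of the transform `Λ(V*) → Λ(V)`. -/
def fourierKernelD (n : ℕ) : Egr n :=
  ∑ m ∈ range (n + 1),
    ((Nat.factorial m : ℂ))⁻¹ • (Complex.I • ∑ j, psv n j * psb n j) ^ m

namespace St7

variable {n : ℕ}

/-- product of generators along a list -/
def lp (g : Fin n → Egr n) (l : List (Fin n)) : Egr n := (l.map g).prod

/-- product of generators over a finset in increasing order -/
def fp (g : Fin n → Egr n) (S : Finset (Fin n)) : Egr n := lp g (S.sort (· ≤ ·))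

@[simp] lemma lp_nil (g : Fin n → Egr n) : lp g [] = 1 := rfl

@[simp] lemma lp_cons (g : Fin n → Egr n) (a : Fin n) (l : List (Fin n)) :
    lp g (a :: l) = g a * lp g l := by simp [lp]

lemma lp_append (g : Fin n → Egr n) (l₁ l₂ : List (Fin n)) :
    lp g (l₁ ++ l₂) = lp g l₁ * lp g l₂ := by simp [lp]

/-- generic anticommutation swap of a single element past a list -/
lemma swap_lp {g : Fin n → Egr n} {x : Egr n} {l : List (Fin n)}
    (hx : ∀ b ∈ l, x * g b = -(g b * x)) :
    x * lp g l = ((-1 : ℂ) ^ l.length) • (lp g l * x) := by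
  induction l with
  | nil => simp
  | cons b t ih =>
    have hb : x * g b = -(g b * x) := hx b (by simp)
    have ih' := ih (fun c hc => hx c (by simp [hc]))
    calc x * lp g (b :: t) = (x * g b) * lp g t := by rw [lp_cons, mul_assoc]
      _ = -(g b * (x * lp g t)) := by rw [hb, neg_mul, mul_assoc]
      _ = -(g b * (((-1 : ℂ) ^ t.length) • (lp g t * x))) := by rw [ih']
      _ = ((-1 : ℂ) ^ (b :: t).length) • (lp g (b :: t) * x) := by
          rw [mul_smul_comm, List.length_cons, lp_cons, pow_succ, mul_comm _ (-1 : ℂ),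
            mul_smul, neg_one_smul, mul_assoc]

/-- anticommuting blocks -/
lemma swap_blocks {g₁ g₂ : Fin n → Egr n} {l₁ l₂ : List (Fin n)}
    (h : ∀ a ∈ l₁, ∀ b ∈ l₂, g₁ a * g₂ b = -(g₂ b * g₁ a)) :
    lp g₁ l₁ * lp g₂ l₂ = ((-1 : ℂ) ^ (l₁.length * l₂.length)) • (lp g₂ l₂ * lp g₁ l₁) := by
  induction l₁ with
  | nil => simp
  | cons a t ih =>
    have ih' := ih (fun c hc => h c (by simp [hc]))
    have hswap := swap_lp (g := g₂) (x := g₁ a) (l := l₂) (fun b hb => h a (by simp) b hb)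
    calc lp g₁ (a :: t) * lp g₂ l₂ = g₁ a * (lp g₁ t * lp g₂ l₂) := by
          rw [lp_cons, mul_assoc]
      _ = ((-1 : ℂ) ^ (t.length * l₂.length)) • (g₁ a * lp g₂ l₂ * lp g₁ t) := by
          rw [ih', mul_smul_comm, mul_assoc]
      _ = ((-1 : ℂ) ^ (t.length * l₂.length) * (-1 : ℂ) ^ l₂.length) •
            (lp g₂ l₂ * g₁ a * lp g₁ t) := by
          rw [hswap, smul_mul_assoc, smul_smul]
      _ = ((-1 : ℂ) ^ ((a :: t).length * l₂.length)) • (lp g₂ l₂ * lp g₁ (a :: t)) := by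
          rw [← pow_add, List.length_cons, lp_cons, mul_assoc]
          congr 2
          ring


section AntiComm

variable {g : Fin n → Egr n} (hg : ∀ a b, g a * g b = -(g b * g a))

include hg

lemma sq_zero (a : Fin n) : g a * g a = 0 := by
  have h := hg a a
  have h2 : (2 : ℂ) • (g a * g a) = 0 := by
    rw [two_smul]
    nth_rewrite 1 [h]
    simp
  simpa using (smul_eq_zero.mp h2).resolve_left (by norm_num)

lemma mul_lp_of_mem {a : Fin n} {l : List (Fin n)} (ha : a ∈ l) :
    g a * lp g l = 0 := by
  induction l with
  | nil => simp at ha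
  | cons b t ih =>
    rcases List.mem_cons.mp ha with rfl | ha'
    · rw [lp_cons, ← mul_assoc, sq_zero hg, zero_mul]
    · rw [lp_cons, ← mul_assoc, hg a b, neg_mul, mul_assoc, ih ha', mul_zero, neg_zero]

lemma lp_append_zero {a : Fin n} {l₁ l₂ : List (Fin n)} (h₁ : a ∈ l₁) (h₂ : a ∈ l₂) :
    lp g (l₁ ++ l₂) = 0 := by
  induction l₁ with
  | nil => simp at h₁
  | cons b t ih =>
    rcases List.mem_cons.mp h₁ with rfl | ha'
    · rw [List.cons_append, lp_cons, mul_lp_of_mem hg (by simp [h₂])]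
    · rw [List.cons_append, lp_cons, ih ha', mul_zero]

lemma mul_lp_sorted {a : Fin n} {l : List (Fin n)} (hl : List.Pairwise (· < ·) l)
    (ha : a ∉ l) :
    g a * lp g l = ((-1 : ℂ) ^ (l.countP (fun b => b < a))) • lp g (l.orderedInsert (· ≤ ·) a) := by
  induction l with
  | nil => simp
  | cons b t ih =>
    rcases lt_or_gt_of_ne (show a ≠ b by rintro rfl; exact ha (by simp)) with hab | hab
    · have hcount : (b :: t).countP (fun x => decide (x < a)) = 0 := by
        rw [List.countP_eq_zero]
        intro x hx
        rcases List.mem_cons.mp hx with rfl | hx'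
        · simpa using not_lt.mpr hab.le
        · simpa using not_lt.mpr ((hab.trans (List.rel_of_pairwise_cons hl hx')).le)
      rw [List.orderedInsert, if_pos hab.le]
      simp [hcount]
    · have hba : ¬ (a ≤ b) := not_le.mpr hab
      have ih' := ih hl.of_cons (fun h => ha (by simp [h]))
      have hcount : (b :: t).countP (fun x => decide (x < a))
          = t.countP (fun x => decide (x < a)) + 1 := by
        rw [List.countP_cons]
        simp [hab]
      rw [List.orderedInsert, if_neg hba, lp_cons, ← mul_assoc, hg a b, neg_mul, mul_assoc,
        ih', hcount, lp_cons, mul_smul_comm, pow_succ]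
      rw [mul_comm _ (-1 : ℂ), mul_smul, neg_one_smul]

/-- insertion into a sorted finset product -/
lemma mul_fp {a : Fin n} {S : Finset (Fin n)} (ha : a ∉ S) :
    g a * fp g S = ((-1 : ℂ) ^ ((S.filter (· < a)).card)) • fp g (insert a S) := by
  have hsort : (insert a S).sort (· ≤ ·) = (S.sort (· ≤ ·)).orderedInsert (· ≤ ·) a := by
    refine List.Perm.eq_of_pairwise' (Finset.pairwise_sort _ _)
      ((Finset.pairwise_sort S (· ≤ ·)).orderedInsert a _) ?_
    · rw [← Multiset.coe_eq_coe]
      have h1 : ((insert a S).sort (· ≤ ·) : Multiset (Fin n)) = (insert a S).val :=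
        Finset.sort_eq _ _
      have h2 : (((S.sort (· ≤ ·)).orderedInsert (· ≤ ·) a : List (Fin n)) : Multiset (Fin n))
          = a ::ₘ (S.sort (· ≤ ·) : List (Fin n)) := by
        rw [Multiset.coe_eq_coe.mpr (List.perm_orderedInsert _ a _)]
        rfl
      rw [h1, h2, Finset.insert_val_of_notMem ha, Finset.sort_eq]
  have hval : ((S.sort (· ≤ ·) : List (Fin n)) : Multiset (Fin n)) = S.val :=
    Finset.sort_eq _ _
  have hcount : (S.sort (· ≤ ·)).countP (fun b => b < a) = (S.filter (· < a)).card := by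
    rw [← Multiset.coe_countP, hval, Multiset.countP_eq_card_filter]
    rfl
  rw [fp, fp, hsort, ← hcount]
  exact mul_lp_sorted hg (Finset.sortedLT_sort S).pairwise (by simpa using ha)

lemma fp_insert {a : Fin n} {S : Finset (Fin n)} (ha : a ∉ S) :
    fp g (insert a S) = ((-1 : ℂ) ^ ((S.filter (· < a)).card)) • (g a * fp g S) := by
  rw [mul_fp hg ha, smul_smul, ← pow_add, ← two_mul, pow_mul, neg_one_sq, one_pow, one_smul]


/-- merge of two disjoint sorted products -/
lemma fp_mul_fp : ∀ (S T : Finset (Fin n)), Disjoint S T →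
    fp g S * fp g T = ((-1 : ℂ) ^ (∑ a ∈ S, (T.filter (· < a)).card)) • fp g (S ∪ T) := by
  intro S
  induction S using Finset.induction_on with
  | empty => intro T _; simp [fp]
  | @insert a S ha ih =>
    intro T hdisj
    have haT : a ∉ T := fun h => by
      simpa using hdisj (by simp : {a} ≤ insert a S) (by simpa using h)
    have hdisj' : Disjoint S T := hdisj.mono_left (by simp)
    have haST : a ∉ S ∪ T := by simp [ha, haT]
    rw [fp_insert hg ha, smul_mul_assoc, mul_assoc, ih T hdisj', mul_smul_comm, smul_smul,
      mul_fp hg haST, smul_smul, Finset.insert_union,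
      Finset.sum_insert ha, ← pow_add, ← pow_add]
    congr 1
    have hfilter : ((S ∪ T).filter (· < a)).card
        = (S.filter (· < a)).card + (T.filter (· < a)).card := by
      rw [Finset.filter_union, Finset.card_union_of_disjoint
        (Finset.disjoint_filter_filter hdisj')]
    rw [hfilter]
    rw [show (S.filter (· < a)).card + (∑ a ∈ S, (T.filter (· < a)).card)
        + ((S.filter (· < a)).card + (T.filter (· < a)).card)
        = (((T.filter (· < a)).card) + ∑ a ∈ S, (T.filter (· < a)).card)
          + 2 * (S.filter (· < a)).card from by ring, pow_add, pow_mul, neg_one_sq, one_pow,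
      mul_one]

lemma fp_mul_fp_zero {S T : Finset (Fin n)} (h : ¬ Disjoint S T) :
    fp g S * fp g T = 0 := by
  obtain ⟨a, haS, haT⟩ := Finset.not_disjoint_iff.mp h
  rw [fp, fp, ← lp_append]
  exact lp_append_zero hg (by simpa using haS) (by simpa using haT)

end AntiComm

@[simp] lemma fp_empty (g : Fin n → Egr n) : fp g ∅ = 1 := by simp [fp]

lemma fp_singleton (g : Fin n → Egr n) (a : Fin n) : fp g {a} = g a := by
  simp [fp, Finset.sort_singleton]

lemma lp_mem_adjoin (g : Fin n → Egr n) (l : List (Fin n)) :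
    lp g l ∈ Algebra.adjoin ℂ (Set.range g) := by
  apply Subalgebra.list_prod_mem
  intro x hx
  obtain ⟨a, _, rfl⟩ := List.mem_map.mp hx
  exact Algebra.subset_adjoin ⟨a, rfl⟩

lemma fp_mem_adjoin (g : Fin n → Egr n) (S : Finset (Fin n)) :
    fp g S ∈ Algebra.adjoin ℂ (Set.range g) := lp_mem_adjoin g _

lemma lp_mem_pow (g : Fin n → Egr n) (l : List (Fin n)) :
    lp g l ∈ ((Submodule.span ℂ (Set.range g)) ^ l.length : Submodule ℂ (Egr n)) := by
  induction l with
  | nil =>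
    simp only [lp_nil, List.length_nil, pow_zero]
    exact Submodule.one_le.mp le_rfl
  | cons a t ih =>
    rw [List.length_cons, lp_cons, pow_succ']
    exact Submodule.mul_mem_mul (Submodule.subset_span ⟨a, rfl⟩) ih

/-- the inversion-count sum rule -/
lemma invc_add_invc (S : Finset (Fin n)) :
    (∑ a ∈ S, (Sᶜ.filter (· < a)).card) + (∑ b ∈ Sᶜ, (S.filter (· < b)).card)
      = S.card * Sᶜ.card := by
  have h1 : ∀ (U V : Finset (Fin n)), (∑ a ∈ U, (V.filter (· < a)).card)
      = ∑ a ∈ U, ∑ b ∈ V, if b < a then 1 else 0 := by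
    intro U V
    refine Finset.sum_congr rfl fun a _ => ?_
    rw [Finset.card_filter]
  rw [h1, h1, Finset.sum_comm (s := Sᶜ)]
  rw [← Finset.sum_add_distrib]
  have : ∀ a ∈ S, ((∑ b ∈ Sᶜ, if b < a then 1 else 0) + ∑ b ∈ Sᶜ, if a < b then 1 else 0)
      = Sᶜ.card := by
    intro a haS
    rw [← Finset.sum_add_distrib]
    have : ∀ b ∈ Sᶜ, ((if b < a then 1 else 0) + if a < b then 1 else 0) = 1 := by
      intro b hbS
      have hab : a ≠ b := fun h => (Finset.mem_compl.mp hbS) (h ▸ haS)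
      rcases lt_trichotomy a b with h | h | h
      · simp [h, not_lt.mpr h.le]
      · exact absurd h hab
      · simp [h, not_lt.mpr h.le]
    rw [Finset.sum_congr rfl this, Finset.sum_const, smul_eq_mul, mul_one]
  rw [Finset.sum_congr rfl this, Finset.sum_const, smul_eq_mul]


section CommHelp

variable {R : Type*} [CommRing R] [Algebra ℂ R] {ι : Type*} [DecidableEq ι]

lemma pow_of_sq_zero (x y : R) (hy : y * y = 0) (p : ℕ) :
    (x + y) ^ (p + 1) = x ^ (p + 1) + ((p : R) + 1) * (y * x ^ p) := by
  induction p with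
  | zero => simp
  | succ p ih =>
    have h1 : (x + y) ^ (p + 1 + 1) = (x + y) * (x + y) ^ (p + 1) := by ring
    rw [h1, ih]
    push_cast
    linear_combination ((p : R) + 1) * x ^ p * hy

lemma sum_sq_zero_pow (s : Finset ι) (x : ι → R) (h : ∀ j ∈ s, x j * x j = 0) :
    (∑ j ∈ s, x j) ^ (s.card + 1) = 0 := by
  induction s using Finset.induction_on with
  | empty => simp
  | @insert a s ha ih =>
    have ih' := ih (fun j hj => h j (by simp [hj]))
    rw [Finset.sum_insert ha, Finset.card_insert_of_notMem ha, add_comm (x a)]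
    rw [pow_of_sq_zero _ _ (h a (by simp)) (s.card + 1)]
    have h5 : (∑ j ∈ s, x j) ^ (s.card + 1 + 1)
        = (∑ j ∈ s, x j) ^ (s.card + 1) * ∑ j ∈ s, x j := by ring
    rw [h5, ih']
    simp

lemma exp_eq_prod (s : Finset ι) (x : ι → R) (h : ∀ j ∈ s, x j * x j = 0) :
    ∑ p ∈ Finset.range (s.card + 1), ((p.factorial : ℂ))⁻¹ • (∑ j ∈ s, x j) ^ p
      = ∏ j ∈ s, (1 + x j) := by
  induction s using Finset.induction_on with
  | empty => simp
  | @insert a s ha ih =>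
    have ih' := ih (fun j hj => h j (by simp [hj]))
    have hbin : ∀ p : ℕ, (∑ j ∈ insert a s, x j) ^ p
        = (∑ j ∈ s, x j) ^ p + (p : R) * (x a * (∑ j ∈ s, x j) ^ (p - 1)) := by
      intro p
      rw [Finset.sum_insert ha, add_comm (x a)]
      cases p with
      | zero => simp
      | succ q =>
        rw [pow_of_sq_zero _ _ (h a (by simp)) q, Nat.succ_sub_one]
        push_cast
        ring
    rw [Finset.card_insert_of_notMem ha]
    calc ∑ p ∈ Finset.range (s.card + 1 + 1), ((p.factorial : ℂ))⁻¹ • (∑ j ∈ insert a s, x j) ^ p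
        = (∑ p ∈ Finset.range (s.card + 1 + 1), ((p.factorial : ℂ))⁻¹ • (∑ j ∈ s, x j) ^ p)
          + ∑ p ∈ Finset.range (s.card + 1 + 1),
              ((p.factorial : ℂ))⁻¹ • ((p : R) * (x a * (∑ j ∈ s, x j) ^ (p - 1))) := by
          rw [← Finset.sum_add_distrib]
          refine Finset.sum_congr rfl fun p _ => ?_
          rw [hbin p, smul_add]
      _ = (∏ j ∈ s, (1 + x j)) + x a * ∏ j ∈ s, (1 + x j) := by
          congr 1
          · rw [Finset.sum_range_succ, sum_sq_zero_pow s x (fun j hj => h j (by simp [hj])),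
              smul_zero, add_zero, ih']
          · rw [Finset.sum_range_succ']
            simp only [Nat.cast_zero, zero_mul, smul_zero, add_zero]
            have hterm : ∀ q : ℕ,
                (((q + 1).factorial : ℂ))⁻¹ • (((q + 1 : ℕ) : R) * (x a * (∑ j ∈ s, x j) ^ (q + 1 - 1)))
                = ((q.factorial : ℂ))⁻¹ • (x a * (∑ j ∈ s, x j) ^ q) := by
              intro q
              rw [Nat.succ_sub_one, ← nsmul_eq_mul, ← Nat.cast_smul_eq_nsmul ℂ, smul_smul]
              congr 1
              rw [Nat.factorial_succ]
              push_cast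
              rw [mul_inv]
              have hq : ((q : ℂ) + 1) ≠ 0 := Nat.cast_add_one_ne_zero q
              have hf : ((q.factorial : ℂ)) ≠ 0 := Nat.cast_ne_zero.mpr q.factorial_ne_zero
              field_simp
            rw [Finset.sum_congr rfl (fun q _ => hterm q), ← ih', Finset.mul_sum]
            refine Finset.sum_congr rfl fun q _ => ?_
            rw [mul_smul_comm]
      _ = ∏ j ∈ insert a s, (1 + x j) := by
          rw [Finset.prod_insert ha]
          ring

end CommHelp


section Center

/-- scalar multiples inside list products -/
lemma lp_smul_list (h : Fin n → Egr n) (z : ℂ) (l : List (Fin n)) :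
    ((l.map fun j => z • h j)).prod = z ^ l.length • (l.map h).prod := by
  induction l with
  | nil => simp
  | cons a t ih =>
    simp only [List.map_cons, List.prod_cons, ih, List.length_cons]
    rw [smul_mul_assoc, mul_smul_comm, smul_smul, pow_succ]
    ring_nf

variable {f e : Fin n → Egr n}

/-- abstract Fourier kernel -/
def kern (f e : Fin n → Egr n) : Egr n :=
  ∑ m ∈ Finset.range (n + 1),
    ((Nat.factorial m : ℂ))⁻¹ • (Complex.I • ∑ j, f j * e j) ^ m

set_option maxHeartbeats 1000000 in
set_option synthInstance.maxHeartbeats 1000000 in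
lemma kern_eq (hcen : ∀ j, (f j * e j) ∈ Subalgebra.center ℂ (Egr n))
    (hsq : ∀ j, (f j * e j) * (f j * e j) = 0) :
    kern f e = ∑ T ∈ (Finset.univ : Finset (Fin n)).powerset,
      (Complex.I ^ T.card) • lp (fun j => f j * e j) (T.sort (· ≤ ·)) := by
  classical
  set Z := Subalgebra.center ℂ (Egr n)
  set c : Fin n → Z := fun j => ⟨Complex.I • (f j * e j), Subalgebra.smul_mem _ (hcen j) _⟩
    with hc
  have csq : ∀ j ∈ (Finset.univ : Finset (Fin n)), c j * c j = 0 := by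
    intro j _
    apply Subtype.ext
    show (Complex.I • (f j * e j)) * (Complex.I • (f j * e j)) = 0
    rw [smul_mul_assoc, mul_smul_comm, hsq, smul_zero, smul_zero]
  have hprod := exp_eq_prod (R := Z) Finset.univ c csq
  have hval := congrArg Z.val hprod
  have hcardu : (Finset.univ : Finset (Fin n)).card = n := by simp
  -- left side
  have hL : Z.val (∑ p ∈ Finset.range ((Finset.univ : Finset (Fin n)).card + 1),
        ((p.factorial : ℂ))⁻¹ • (∑ j, c j) ^ p) = kern f e := by
    rw [map_sum, hcardu]
    refine Finset.sum_congr rfl fun p _ => ?_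
    rw [map_smul, map_pow, map_sum]
    congr 2
    have : ∀ j ∈ (Finset.univ : Finset (Fin n)),
        Z.val (c j) = Complex.I • (f j * e j) := fun j _ => rfl
    rw [Finset.sum_congr rfl this, ← Finset.smul_sum]
  -- right side
  have hR : Z.val (∏ j, (1 + c j))
      = ∑ T ∈ (Finset.univ : Finset (Fin n)).powerset,
        (Complex.I ^ T.card) • lp (fun j => f j * e j) (T.sort (· ≤ ·)) := by
    have h1 : (∏ j, ((1 : Z) + c j)) = ∑ T ∈ (Finset.univ : Finset (Fin n)).powerset,
        (∏ j ∈ T, c j) * ∏ j ∈ Finset.univ \ T, (1 : Z) := by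
      rw [← Finset.prod_add]
      exact Finset.prod_congr rfl fun j _ => (add_comm _ _)
    rw [h1, map_sum]
    refine Finset.sum_congr rfl fun T _ => ?_
    rw [Finset.prod_const_one, mul_one]
    have h2 : (∏ j ∈ T, c j) = ((T.sort (· ≤ ·)).map c).prod := by
      rw [Finset.prod_eq_multiset_prod, ← Finset.sort_eq T (· ≤ ·), Multiset.map_coe,
        Multiset.prod_coe]
    rw [h2, map_list_prod]
    have h3 : (List.map (⇑Z.val) ((T.sort (· ≤ ·)).map c))
        = (T.sort (· ≤ ·)).map (fun j => Complex.I • (f j * e j)) := by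
      rw [List.map_map]; rfl
    rw [h3, lp_smul_list, Finset.length_sort]
    rfl
  rw [← hL, hval, hR]


lemma tri_succ (m : ℕ) : (m + 1) * m / 2 = m * (m - 1) / 2 + m := by
  have h1 : (m + 1) * m / 2 = (m + 1).choose 2 := by
    rw [Nat.choose_two_right, Nat.succ_sub_one]
  have h2 : m * (m - 1) / 2 = m.choose 2 := (Nat.choose_two_right m).symm
  rw [h1, h2, Nat.choose_succ_succ, Nat.choose_one_right, add_comm]

/-- splitting a product of `f j * e j` factors -/
lemma lp_q_split (hee : ∀ a b, e a * e b = -(e b * e a))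
    (hef : ∀ a b, e a * f b = -(f b * e a)) (l : List (Fin n)) :
    lp (fun j => f j * e j) l
      = ((-1 : ℂ) ^ (l.length * (l.length - 1) / 2)) • (lp f l * lp e l) := by
  induction l with
  | nil => simp
  | cons j t ih =>
    have hswap := swap_lp (g := f) (x := e j) (l := t) (fun b _ => hef j b)
    have key : (f j * e j) * (lp f t * lp e t)
        = ((-1 : ℂ) ^ t.length) • (f j * lp f t * (e j * lp e t)) := by
      calc (f j * e j) * (lp f t * lp e t) = f j * ((e j * lp f t) * lp e t) := by
            simp only [mul_assoc]
        _ = ((-1 : ℂ) ^ t.length) • (f j * lp f t * (e j * lp e t)) := by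
            rw [hswap, smul_mul_assoc, mul_smul_comm]
            simp only [mul_assoc]
    rw [lp_cons, ih, lp_cons, lp_cons, mul_smul_comm, key, smul_smul, ← pow_add]
    congr 2
    rw [List.length_cons, show t.length + 1 - 1 = t.length from rfl, tri_succ, add_comm]

end Center

section OneStep

variable {f e : Fin n → Egr n}

set_option maxHeartbeats 1000000 in
lemma oneStep
    (hee : ∀ a b, e a * e b = -(e b * e a))
    (hff : ∀ a b, f a * f b = -(f b * f a))
    (hef : ∀ a b, e a * f b = -(f b * e a))
    (hcen : ∀ j, (f j * e j) ∈ Subalgebra.center ℂ (Egr n))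
    (B : Egr n →ₗ[ℂ] Egr n)
    (hTop : ∀ ξ ∈ Algebra.adjoin ℂ (Set.range f), B (ξ * fp e Finset.univ) = ξ)
    (hLow : ∀ ξ ∈ Algebra.adjoin ℂ (Set.range f), ∀ k < n,
      ∀ y ∈ ((Submodule.span ℂ (Set.range e)) ^ k : Submodule ℂ (Egr n)), B (ξ * y) = 0)
    (S : Finset (Fin n)) :
    B (fp e S * kern f e) =
      (Complex.I ^ Sᶜ.card *
        (-1 : ℂ) ^ (Sᶜ.card * (Sᶜ.card - 1) / 2 + S.card * Sᶜ.card
          + ∑ a ∈ S, (Sᶜ.filter (· < a)).card)) • fp f Sᶜ := by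
  classical
  have hqsq : ∀ j, (f j * e j) * (f j * e j) = 0 := by
    intro j
    rw [mul_assoc, ← mul_assoc (e j), hef j j, neg_mul, mul_assoc, sq_zero hee, mul_zero,
      neg_zero, mul_zero]
  rw [kern_eq hcen hqsq, Finset.mul_sum]
  have hterm : ∀ T : Finset (Fin n),
      fp e S * (Complex.I ^ T.card • lp (fun j => f j * e j) (T.sort (· ≤ ·)))
        = (Complex.I ^ T.card * (-1 : ℂ) ^ (T.card * (T.card - 1) / 2 + S.card * T.card))
            • (fp f T * (fp e S * fp e T)) := by
    intro T
    have hsplit := lp_q_split hee hef (T.sort (· ≤ ·))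
    rw [Finset.length_sort] at hsplit
    have hblock : fp e S * fp f T = ((-1 : ℂ) ^ (S.card * T.card)) • (fp f T * fp e S) := by
      have := swap_blocks (g₁ := e) (g₂ := f) (l₁ := S.sort (· ≤ ·)) (l₂ := T.sort (· ≤ ·))
        (fun a _ b _ => hef a b)
      rw [Finset.length_sort, Finset.length_sort] at this
      exact this
    rw [mul_smul_comm, hsplit, mul_smul_comm, smul_smul]
    have : fp e S * (lp f (T.sort (· ≤ ·)) * lp e (T.sort (· ≤ ·)))
        = ((-1 : ℂ) ^ (S.card * T.card)) • (fp f T * (fp e S * fp e T)) := by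
      rw [← mul_assoc]
      rw [show lp f (T.sort (· ≤ ·)) = fp f T from rfl,
        show lp e (T.sort (· ≤ ·)) = fp e T from rfl]
      rw [hblock, smul_mul_assoc, mul_assoc]
    rw [this, smul_smul]
    congr 1
    ring
  rw [map_sum]
  rw [Finset.sum_congr rfl (fun T _ => by rw [hterm T])]
  rw [Finset.sum_eq_single_of_mem Sᶜ (Finset.mem_powerset.mpr (Finset.subset_univ _))]
  · -- the surviving term
    have hdisj : Disjoint S Sᶜ := disjoint_compl_right
    have hmerge := fp_mul_fp hee S Sᶜ hdisj
    rw [Finset.union_compl] at hmerge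
    rw [map_smul, hmerge, mul_smul_comm, map_smul, hTop (fp f Sᶜ) (fp_mem_adjoin f Sᶜ),
      smul_smul]
    congr 1
    ring
  · -- vanishing terms
    intro T hT hTne
    by_cases hdisj : Disjoint S T
    · have hcard : S.card + T.card < n := by
        have h1 : (S ∪ T).card = S.card + T.card := Finset.card_union_of_disjoint hdisj
        have h2 : (S ∪ T).card ≤ n := by
          simpa using Finset.card_le_univ (S ∪ T)
        rcases lt_or_eq_of_le h2 with h | h
        · omega
        · exfalso
          have huniv : S ∪ T = Finset.univ := Finset.eq_univ_of_card _ (by simpa using h)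
          have : Sᶜ = T := by
            rw [Finset.compl_eq_univ_sdiff, ← huniv, Finset.union_sdiff_cancel_left hdisj]
          exact hTne this.symm
      have hmem : fp e S * fp e T ∈
          ((Submodule.span ℂ (Set.range e)) ^ (S.card + T.card) : Submodule ℂ (Egr n)) := by
        rw [fp, fp, ← lp_append]
        have := lp_mem_pow e (S.sort (· ≤ ·) ++ T.sort (· ≤ ·))
        rwa [List.length_append, Finset.length_sort, Finset.length_sort] at this
      rw [map_smul, hLow (fp f T) (fp_mem_adjoin f T) (S.card + T.card) hcard _ hmem,
        smul_zero]
    · rw [fp_mul_fp_zero hee hdisj, mul_zero, map_smul, map_zero, smul_zero]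

end OneStep

end St7

namespace St7

variable {n : ℕ}

lemma iota_anticomm (u v : (Fin n → ℂ) × (Fin n → ℂ)) :
    (ExteriorAlgebra.ι ℂ u : Egr n) * ExteriorAlgebra.ι ℂ v
      = -(ExteriorAlgebra.ι ℂ v * ExteriorAlgebra.ι ℂ u) :=
  eq_neg_of_add_eq_zero_left (ExteriorAlgebra.ι_add_mul_swap u v)

lemma iota_central (u v : (Fin n → ℂ) × (Fin n → ℂ)) :
    (ExteriorAlgebra.ι ℂ u : Egr n) * ExteriorAlgebra.ι ℂ v ∈ Subalgebra.center ℂ (Egr n) := by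
  rw [Subalgebra.mem_center_iff]
  intro b
  induction b using ExteriorAlgebra.induction with
  | algebraMap r => exact Algebra.commutes r _
  | ι w =>
    rw [← mul_assoc, iota_anticomm w u, neg_mul, mul_assoc, iota_anticomm w v, mul_neg,
      neg_neg, ← mul_assoc]
  | mul x y hx hy => rw [mul_assoc, hy, ← mul_assoc, hx, mul_assoc]
  | add x y hx hy => rw [add_mul, hx, hy, mul_add]

lemma hvv : ∀ a b, psv n a * psv n b = -(psv n b * psv n a) := fun _ _ => iota_anticomm _ _
lemma hbb : ∀ a b, psb n a * psb n b = -(psb n b * psb n a) := fun _ _ => iota_anticomm _ _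
lemma hvb : ∀ a b, psv n a * psb n b = -(psb n b * psv n a) := fun _ _ => iota_anticomm _ _
lemma hbv : ∀ a b, psb n a * psv n b = -(psv n b * psb n a) := fun _ _ => iota_anticomm _ _

lemma psvTop_eq : psvTop n = fp (psv n) Finset.univ := by
  rw [psvTop, fp, Fin.sort_univ]
  rfl

lemma psbTop_eq : psbTop n = fp (psb n) Finset.univ := by
  rw [psbTop, fp, Fin.sort_univ]
  rfl

lemma fourierKernel_eq : fourierKernel n = kern (psb n) (psv n) := rfl

lemma fourierKernelD_eq : fourierKernelD n = kern (psv n) (psb n) := rfl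

lemma even_t_pred (t : ℕ) : 2 * (t * (t - 1) / 2) = t * (t - 1) := by
  apply Nat.two_mul_div_two_of_even
  cases t with
  | zero => simp
  | succ s => simpa [Nat.succ_sub_one, mul_comm] using Nat.even_mul_succ_self s

lemma t_add_t_pred (t : ℕ) : t + t * (t - 1) = t * t := by
  cases t with
  | zero => simp
  | succ s =>
    simp only [Nat.succ_sub_one]
    ring

lemma I_pow_mul_neg_one_pow (a b : ℕ) :
    Complex.I ^ a * (-1 : ℂ) ^ b = Complex.I ^ (a + 2 * b) := by
  rw [pow_add, pow_mul, Complex.I_sq]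

lemma coef_coef (hn : Even n) (S : Finset (Fin n)) :
    (Complex.I ^ Sᶜ.card * (-1 : ℂ) ^ (Sᶜ.card * (Sᶜ.card - 1) / 2 + S.card * Sᶜ.card
        + ∑ a ∈ S, (Sᶜ.filter (· < a)).card))
      * (Complex.I ^ S.card * (-1 : ℂ) ^ (S.card * (S.card - 1) / 2 + Sᶜ.card * S.card
        + ∑ a ∈ Sᶜ, (S.filter (· < a)).card)) = 1 := by
  obtain ⟨p, hp⟩ := hn
  set k := S.card with hk
  set m := Sᶜ.card with hm
  set i₁ := ∑ a ∈ S, (Sᶜ.filter (· < a)).card with hi₁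
  set i₂ := ∑ a ∈ Sᶜ, (S.filter (· < a)).card with hi₂
  have hkm : k + m = n := (S.card_add_card_compl).trans (Fintype.card_fin n)
  have hinv : i₁ + i₂ = k * m := invc_add_invc S
  rw [I_pow_mul_neg_one_pow, I_pow_mul_neg_one_pow, ← pow_add]
  have hexp : m + 2 * (m * (m - 1) / 2 + k * m + i₁)
      + (k + 2 * (k * (k - 1) / 2 + m * k + i₂)) = 4 * (p * p + k * m) := by
    rw [Nat.mul_add, Nat.mul_add, Nat.mul_add, Nat.mul_add, even_t_pred, even_t_pred]
    have h1 := t_add_t_pred m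
    have h2 := t_add_t_pred k
    have h3 : (k + m) * (k + m) = k * k + 2 * (k * m) + m * m := by ring
    have h4 : (k + m) * (k + m) = 4 * (p * p) := by
      rw [hkm, hp]
      ring
    have h5 : 2 * i₁ + 2 * i₂ = 2 * (k * m) := by omega
    have h6 : m * k = k * m := Nat.mul_comm m k
    linarith
  rw [hexp, pow_mul, Complex.I_pow_four, one_pow]

end St7

theorem statement7 {n : ℕ} (hn : Even n)
    (Ber : Egr n →ₗ[ℂ] Egr n)
    (hBer_top : ∀ ξ ∈ AlgD n, Ber (ξ * psvTop n) = ξ)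
    (hBer_low : ∀ ξ ∈ AlgD n, ∀ k < n, ∀ y ∈ ((PV n) ^ k : Submodule ℂ (Egr n)),
      Ber (ξ * y) = 0)
    (BerD : Egr n →ₗ[ℂ] Egr n)
    (hBerD_top : ∀ y ∈ AlgV n, BerD (y * psbTop n) = y)
    (hBerD_low : ∀ y ∈ AlgV n, ∀ k < n, ∀ x ∈ ((PD n) ^ k : Submodule ℂ (Egr n)),
      BerD (y * x) = 0) :
    ∀ η ∈ AlgV n, BerD (Ber (η * fourierKernel n) * fourierKernelD n) = η := by
  classical
  intro eta heta
  set Mo : Submodule ℂ (Egr n) :=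
    Submodule.span ℂ (Set.range (fun S : Finset (Fin n) => St7.fp (psv n) S)) with hMo
  have hgenmul : ∀ S T : Finset (Fin n), St7.fp (psv n) S * St7.fp (psv n) T ∈ Mo := by
    intro S T
    by_cases hdisj : Disjoint S T
    · rw [St7.fp_mul_fp St7.hvv S T hdisj]
      exact Mo.smul_mem _ (Submodule.subset_span ⟨S ∪ T, rfl⟩)
    · rw [St7.fp_mul_fp_zero St7.hvv hdisj]
      exact Mo.zero_mem
  have hmulM : ∀ (x y : Egr n), x ∈ Mo → y ∈ Mo → x * y ∈ Mo := by
    intro x y hx hy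
    have h1 : Mo * Mo ≤ Mo := by
      rw [hMo, Submodule.span_mul_span, Submodule.span_le]
      rintro z ⟨x', ⟨S, rfl⟩, y', ⟨T, rfl⟩, rfl⟩
      exact hgenmul S T
    exact h1 (Submodule.mul_mem_mul hx hy)
  have honeM : (1 : Egr n) ∈ Mo := by
    have h := Submodule.subset_span
      (R := ℂ) (s := Set.range (fun S : Finset (Fin n) => St7.fp (psv n) S))
      ⟨(∅ : Finset (Fin n)), rfl⟩
    simpa [St7.fp_empty] using h
  have hetaM : eta ∈ Mo := by
    have hle : AlgV n ≤ Mo.toSubalgebra honeM hmulM := by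
      apply Algebra.adjoin_le
      rintro x ⟨a, rfl⟩
      show psv n a ∈ Mo
      exact (St7.fp_singleton (psv n) a) ▸ Submodule.subset_span ⟨{a}, rfl⟩
    exact hle heta
  have hcen1 : ∀ j, psb n j * psv n j ∈ Subalgebra.center ℂ (Egr n) :=
    fun _ => St7.iota_central _ _
  have hcen2 : ∀ j, psv n j * psb n j ∈ Subalgebra.center ℂ (Egr n) :=
    fun _ => St7.iota_central _ _
  have hTop1 : ∀ ξ ∈ Algebra.adjoin ℂ (Set.range (psb n)),
      Ber (ξ * St7.fp (psv n) Finset.univ) = ξ := by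
    intro ξ hξ
    rw [← St7.psvTop_eq]
    exact hBer_top ξ hξ
  have hTop2 : ∀ ξ ∈ Algebra.adjoin ℂ (Set.range (psv n)),
      BerD (ξ * St7.fp (psb n) Finset.univ) = ξ := by
    intro ξ hξ
    rw [← St7.psbTop_eq]
    exact hBerD_top ξ hξ
  have key : ∀ S : Finset (Fin n),
      BerD (Ber (St7.fp (psv n) S * fourierKernel n) * fourierKernelD n)
        = St7.fp (psv n) S := by
    intro S
    have h1 := St7.oneStep (e := psv n) (f := psb n) St7.hvv St7.hbb St7.hvb hcen1 Ber
      hTop1 hBer_low S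
    have h2 := St7.oneStep (e := psb n) (f := psv n) St7.hbb St7.hvv St7.hbv hcen2 BerD
      hTop2 hBerD_low Sᶜ
    rw [compl_compl] at h2
    rw [St7.fourierKernel_eq, h1, smul_mul_assoc, map_smul, St7.fourierKernelD_eq, h2,
      smul_smul, St7.coef_coef hn S, one_smul]
  refine Submodule.span_induction ?_ ?_ ?_ ?_ hetaM
  · rintro x ⟨S, rfl⟩
    exact key S
  · simp
  · intro x y _ _ px py
    rw [add_mul, map_add, add_mul, map_add, px, py]
  · intro c x _ px
    rw [smul_mul_assoc, map_smul, smul_mul_assoc, map_smul, px]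
end
end

section
/- Assume additionally that there exists an A-module map π : A ⊗ h → K with π ∘ ι = id_K. Then the D₂-cohomology of B is concentrated in first degree p = 0: for every p > 0 and q, every η ∈ B^{p,q} with D₂η = 0 is of the form D₂ρ for some ρ ∈ B^{p−1,q+1}; and in degree p = 0 the kernel of D₂ : B^{0,q} → B^{1,q−1} consists exactly of those η ∈ B^{0,q} whose A-multilinear extension vanishes whenever one of its arguments lies in ι(K) ⊆ A ⊗ h. -/
/-!
STATEMENT 16.  Context: as in Statement 15, a finite-dimensional real Lie algebra
`h` acts by derivations (`act`) on a commutative real algebra `A`, and `K ⊆ A ⊗ h`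
is an `A`-submodule stable under the `h`-action; cochains `η ∈ B^{p,q}` are
formalized through their canonical `A`-multilinear extensions (`Raw`/`IsCochain`),
and `D₂ : B^{p,q} → B^{p+1,q−1}` is
`(D₂η)(ξ̄)(φ₁,…,φ_{p+1}) = Σᵢ η(ι(φᵢ), ξ̄)(φ₁,…,φ̂ᵢ,…)`.

Hypothesis: there is an `A`-module map `π : A ⊗ h → K` with `π ∘ ι = id_K`.
Conclusion: the `D₂`-cohomology is concentrated in first degree `p = 0`: for
`p > 0`, every `D₂`-closed `η ∈ B^{p,q}` is `D₂ρ` for some `ρ ∈ B^{p−1,q+1}`;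
and in degree `p = 0` the kernel of `D₂` consists exactly of the cochains
vanishing whenever one of their arguments lies in `ι(K) ⊆ A ⊗ h`.
-/

open scoped TensorProduct
open Finset

noncomputable section

variable (A : Type) [CommRing A] [Algebra ℝ A]
variable (h : Type) [LieRing h] [LieAlgebra ℝ h]

/-- The `A`-module `A ⊗ h`. -/
abbrev AH (A : Type) [CommRing A] [Algebra ℝ A]
    (h : Type) [LieRing h] [LieAlgebra ℝ h] := A ⊗[ℝ] h

/-- The extension of the `h`-action on `A` (by derivations, `act`) to an
`A`-linear "anchor" `A ⊗ h → End(A)`, `f ⊗ ξ ↦ f · (ξ · —)`. -/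
def actAH (act : h →ₗ[ℝ] Module.End ℝ A) : AH A h →ₗ[ℝ] Module.End ℝ A :=
  TensorProduct.lift
    (((LinearMap.llcomp ℝ A A A).comp (LinearMap.mul ℝ A)).compl₂ act)

section

attribute [local instance 100] LieRing.ofAssociativeRing

/-- The "current algebra" part of the bracket on `A ⊗ h`:
`(f⊗ξ, g⊗ν) ↦ fg ⊗ [ξ,ν]`. -/
def curBr : AH A h →ₗ[ℝ] AH A h →ₗ[ℝ] AH A h :=
  TensorProduct.lift
    (((TensorProduct.mapBilinear (σ₁₂ := RingHom.id ℝ) A h A h).comp (LinearMap.mul ℝ A)).compl₂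
      (LieAlgebra.ad ℝ h).toLinearMap)

end

/-- The "action" part: `(f⊗ξ, g⊗ν) ↦ (f · ξ(g)) ⊗ ν`. -/
def actBr (act : h →ₗ[ℝ] Module.End ℝ A) : AH A h →ₗ[ℝ] AH A h →ₗ[ℝ] AH A h :=
  TensorProduct.lift
    ((((LinearMap.llcomp ℝ A A A).comp (LinearMap.mul ℝ A)).compl₂ act).compr₂
      ((TensorProduct.mapBilinear (σ₁₂ := RingHom.id ℝ) A h A h).flip LinearMap.id))

/-- The canonical action of `A ⊗ h` on `A ⊗ h` extending the `h`-action
`ξ·(g⊗ν) = (ξ·g)⊗ν + g⊗[ξ,ν]` (A-linearly in the acting variable). -/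
def repAH (act : h →ₗ[ℝ] Module.End ℝ A) : AH A h →ₗ[ℝ] AH A h →ₗ[ℝ] AH A h :=
  curBr A h + actBr A h act

/-- The (transformation Lie algebroid) bracket of `A ⊗ h`:
`[f⊗ξ, g⊗ν] = fg⊗[ξ,ν] + f(ξ·g)⊗ν − g(ν·f)⊗ξ`. -/
def brAH (act : h →ₗ[ℝ] Module.End ℝ A) : AH A h →ₗ[ℝ] AH A h →ₗ[ℝ] AH A h :=
  curBr A h + actBr A h act - (actBr A h act).flip

/-- The space of raw `(p,q)`-cochains: functions of `q` arguments from `A ⊗ h`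
(the canonical `A`-multilinear extension of the `h`-slots) and `p` arguments
from `K ⊆ A ⊗ h`, with values in `A`. -/
def Raw (A : Type) [CommRing A] [Algebra ℝ A] (h : Type) [LieRing h] [LieAlgebra ℝ h]
    (p q : ℕ) : Type :=
  (Fin q → AH A h) → (Fin p → AH A h) → A

/-- The list of arguments `([ξᵢ,ξⱼ], ξ₁, …, ξ̂ᵢ, …, ξ̂ⱼ, …)` obtained from
`(ξ₁, …, ξ_{q+1})` by removing the `i`-th and `j`-th entries (for `i < j`) and
prepending the bracket `br`. -/
def insBr {q : ℕ} (br : AH A h) (xs : Fin (q + 1) → AH A h) (i j : Fin (q + 1)) :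
    Fin q → AH A h :=
  fun m =>
    if (m : ℕ) = 0 then br
    else
      xs ⟨((fun t => if t < (i : ℕ) then t else if t + 1 < (j : ℕ) then t + 1 else t + 2)
            ((m : ℕ) - 1)) % (q + 1),
          Nat.mod_lt _ (Nat.succ_pos q)⟩

/-- The Chevalley–Eilenberg differential `D₁` (of the Lie algebra `h` acting on the
symmetric `K`-multilinear forms, written on the canonical `A`-multilinear
extensions):
`(D₁η)(ξ₁,…,ξ_{q+1}) = Σᵢ (−1)^{i−1} ξᵢ·(η(ξ₁,…,ξ̂ᵢ,…)) +
Σ_{i<j} (−1)^{i+j} η([ξᵢ,ξⱼ], ξ₁,…,ξ̂ᵢ,…,ξ̂ⱼ,…)`, where the action on the value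
is `(ξ·σ)(φ₁,…,φ_p) = ξ·(σ(φs)) − Σ_k σ(φ₁,…,ξ·φ_k,…,φ_p)`. -/
def D1 (act : h →ₗ[ℝ] Module.End ℝ A) {p q : ℕ} (η : Raw A h p q) :
    Raw A h p (q + 1) :=
  fun xs φs =>
    (∑ i : Fin (q + 1), ((-1 : ℝ) ^ (i : ℕ)) •
      (actAH A h act (xs i) (η (xs ∘ i.succAbove) φs)
        - ∑ k : Fin p,
            η (xs ∘ i.succAbove)
              (Function.update φs k (repAH A h act (xs i) (φs k)))))
    + ∑ i : Fin (q + 1), ∑ j : Fin (q + 1),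
        if (i : ℕ) < (j : ℕ) then
          ((-1 : ℝ) ^ ((i : ℕ) + (j : ℕ))) •
            η (insBr A h (brAH A h act (xs i) (xs j)) xs i j) φs
        else 0

/-- The Koszul-type differential `D₂`:
`(D₂η)(ξ₁,…,ξ_{q})(φ₁,…,φ_{p+1}) = Σᵢ η(ι(φᵢ), ξ₁,…,ξ_q)(φ₁,…,φ̂ᵢ,…,φ_{p+1})`. -/
def D2 {p q : ℕ} (η : Raw A h p (q + 1)) : Raw A h (p + 1) q :=
  fun xs φs => ∑ i : Fin (p + 1), η (Fin.cons (φs i) xs) (φs ∘ i.succAbove)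

/-- Membership of a raw cochain in `B^{p,q}`: `A`-multilinear and alternating in
the `q` slots from `A ⊗ h` (this is the canonical extension of "alternating
ℝ-multilinear in the arguments from `h`"), and — on arguments from `K` —
symmetric and `A`-multilinear in the `p` slots from `K`. -/
def IsCochain (K : Submodule A (AH A h)) {p q : ℕ} (η : Raw A h p q) : Prop :=
  (∀ xs φs (i : Fin q) (x y : AH A h),
      η (Function.update xs i (x + y)) φs
        = η (Function.update xs i x) φs + η (Function.update xs i y) φs) ∧
  (∀ xs φs (i : Fin q) (a : A) (x : AH A h),
      η (Function.update xs i (a • x)) φs = a * η (Function.update xs i x) φs) ∧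
  (∀ xs φs (i j : Fin q), i ≠ j → xs i = xs j → η xs φs = 0) ∧
  (∀ xs φs (k : Fin p) (x y : AH A h), (∀ l, φs l ∈ K) → x ∈ K → y ∈ K →
      η xs (Function.update φs k (x + y))
        = η xs (Function.update φs k x) + η xs (Function.update φs k y)) ∧
  (∀ xs φs (k : Fin p) (a : A) (x : AH A h), (∀ l, φs l ∈ K) → x ∈ K →
      η xs (Function.update φs k (a • x)) = a * η xs (Function.update φs k x)) ∧
  (∀ xs φs (k l : Fin p), (∀ m, φs m ∈ K) →
      η xs (φs ∘ (Equiv.swap k l)) = η xs φs)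

namespace Statement16Aux

variable {A : Type} [CommRing A] [Algebra ℝ A]
variable {h : Type} [LieRing h] [LieAlgebra ℝ h]

lemma eq_zero_of_self_eq_neg {a : A} (ha : a = -a) : a = 0 := by
  have h2 : (2:ℝ) • a = 0 := by
    rw [two_smul]; nth_rewrite 2 [ha]; exact add_neg_cancel a
  have h3 := congrArg (fun x => ((2:ℝ)⁻¹) • x) h2
  simp only [smul_smul, smul_zero] at h3
  norm_num at h3
  exact h3

lemma fin0_eq (f g : Fin 0 → AH A h) : f = g := funext fun m => m.elim0

lemma consK {m : ℕ} {K : Submodule A (AH A h)} {a : AH A h} {ψ : Fin m → AH A h}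
    (ha : a ∈ K) (hψ : ∀ l, ψ l ∈ K) : ∀ l, (Fin.cons a ψ : Fin (m+1) → AH A h) l ∈ K := by
  intro l
  refine Fin.cases ?_ ?_ l
  · rw [Fin.cons_zero]; exact ha
  · intro t; rw [Fin.cons_succ]; exact hψ t

lemma cons_comp_succAbove_zero {m : ℕ} (a : AH A h) (xs : Fin m → AH A h) :
    (Fin.cons a xs : Fin (m+1) → AH A h) ∘ Fin.succAbove (0 : Fin (m+1)) = xs := by
  funext t
  simp [Fin.succAbove_zero, Function.comp, Fin.cons_succ]

lemma cons_comp_succAbove_succ {m : ℕ} (a : AH A h) (xs : Fin (m+1) → AH A h) (j : Fin (m+1)) :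
    (Fin.cons a xs : Fin (m+2) → AH A h) ∘ Fin.succAbove j.succ
      = Fin.cons a (xs ∘ Fin.succAbove j) := by
  funext t
  refine Fin.cases ?_ ?_ t
  · simp [Function.comp, Fin.succ_succAbove_zero]
  · intro u; simp [Function.comp, Fin.succ_succAbove_succ, Fin.cons_succ]

lemma swap_succ {m : ℕ} (k l t : Fin m) :
    Equiv.swap k.succ l.succ t.succ = (Equiv.swap k l t).succ := by
  rcases eq_or_ne t k with rfl | htk
  · simp
  · rcases eq_or_ne t l with rfl | htl
    · simp
    · rw [Equiv.swap_apply_of_ne_of_ne htk htl,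
        Equiv.swap_apply_of_ne_of_ne ((Fin.succ_injective _).ne htk)
          ((Fin.succ_injective _).ne htl)]

lemma swap_succ_zero {m : ℕ} (k l : Fin m) :
    Equiv.swap k.succ l.succ (0 : Fin (m+1)) = 0 :=
  Equiv.swap_apply_of_ne_of_ne (Fin.succ_ne_zero k).symm (Fin.succ_ne_zero l).symm

lemma cons_comp_swap_succ {m : ℕ} (a : AH A h) (ψ : Fin m → AH A h) (k l : Fin m) :
    (Fin.cons a ψ : Fin (m+1) → AH A h) ∘ (Equiv.swap k.succ l.succ)
      = Fin.cons a (ψ ∘ Equiv.swap k l) := by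
  funext t
  refine Fin.cases ?_ ?_ t
  · simp [Function.comp, swap_succ_zero]
  · intro u
    simp only [Function.comp_apply, swap_succ, Fin.cons_succ]

lemma swap_succAbove_adj {n : ℕ} (i j : Fin (n+1)) (hj : (j:ℕ) = (i:ℕ) + 1) (m : Fin n) :
    Equiv.swap i j (Fin.succAbove i m) = Fin.succAbove j m := by
  rcases lt_or_ge (m.castSucc) i with hlt | hle
  · have hltj : m.castSucc < j := by
      rw [Fin.lt_def] at hlt ⊢; omega
    rw [Fin.succAbove_of_castSucc_lt _ _ hlt, Fin.succAbove_of_castSucc_lt _ _ hltj,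
      Equiv.swap_apply_of_ne_of_ne (ne_of_lt hlt) (ne_of_lt hltj)]
  · rw [Fin.succAbove_of_le_castSucc _ _ hle]
    rcases eq_or_lt_of_le hle with heq | hlt2
    · have hv : (i:ℕ) = (m:ℕ) := by
        rw [Fin.ext_iff] at heq; simpa using heq
      have hsj : m.succ = j := by
        rw [Fin.ext_iff, Fin.val_succ, hj]; omega
      have hcs : m.castSucc < j := by
        rw [Fin.lt_def, Fin.coe_castSucc, hj]; omega
      rw [hsj, Equiv.swap_apply_right, Fin.succAbove_of_castSucc_lt _ _ hcs]
      exact heq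
    · have h1 : m.succ ≠ i := by
        rw [Fin.ne_iff_vne]; rw [Fin.lt_def] at hlt2; simp only [Fin.coe_castSucc] at hlt2
        simp [Fin.val_succ]; omega
      have h2 : m.succ ≠ j := by
        rw [Fin.ne_iff_vne]; rw [Fin.lt_def] at hlt2; simp only [Fin.coe_castSucc] at hlt2
        simp [Fin.val_succ]; omega
      have hle2 : j ≤ m.castSucc := by
        rw [Fin.le_def]; rw [Fin.lt_def] at hlt2; simp only [Fin.coe_castSucc] at hlt2 ⊢; omega
      rw [Equiv.swap_apply_of_ne_of_ne h1 h2, Fin.succAbove_of_le_castSucc _ _ hle2]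

end Statement16Aux
namespace Statement16Aux

variable {A : Type} [CommRing A] [Algebra ℝ A]
variable {h : Type} [LieRing h] [LieAlgebra ℝ h]

lemma slot_zero {p q : ℕ} {η : Raw A h p q}
    (h2 : ∀ xs φs (i : Fin q) (a : A) (x : AH A h),
      η (Function.update xs i (a • x)) φs = a * η (Function.update xs i x) φs)
    (xs : Fin q → AH A h) (φs : Fin p → AH A h) (i : Fin q) (hx : xs i = 0) :
    η xs φs = 0 := by
  have hupd : Function.update xs i ((0:A) • (0 : AH A h)) = xs := by
    rw [zero_smul, ← hx, Function.update_eq_self]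
  have h0 := h2 xs φs i 0 0
  rw [hupd, zero_mul] at h0
  exact h0

lemma swap_anti {p q : ℕ} {η : Raw A h p q}
    (h1 : ∀ xs φs (i : Fin q) (x y : AH A h),
      η (Function.update xs i (x + y)) φs
        = η (Function.update xs i x) φs + η (Function.update xs i y) φs)
    (h3 : ∀ xs φs (i j : Fin q), i ≠ j → xs i = xs j → η xs φs = 0)
    (xs : Fin q → AH A h) (φs : Fin p → AH A h) {i j : Fin q} (hij : i ≠ j) :
    η (fun m => xs (Equiv.swap i j m)) φs = - η xs φs := by
  set S := xs i + xs j with hS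
  have hu : η (Function.update (Function.update xs i S) j S) φs = 0 := by
    refine h3 _ _ i j hij ?_
    rw [Function.update_of_ne hij, Function.update_self, Function.update_self]
  have e1 : η (Function.update (Function.update xs i S) j S) φs
      = η (Function.update (Function.update xs i S) j (xs i)) φs
        + η (Function.update (Function.update xs i S) j (xs j)) φs := h1 _ _ j (xs i) (xs j)
  have e2 : Function.update (Function.update xs i S) j (xs j) = Function.update xs i S := by
    have hji : xs j = (Function.update xs i S) j := (Function.update_of_ne hij.symm _ _).symm
    rw [hji, Function.update_eq_self]
  have e3 : η (Function.update xs i S) φs = η xs φs + η (Function.update xs i (xs j)) φs := by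
    have h0 := h1 xs φs i (xs i) (xs j)
    rw [Function.update_eq_self] at h0
    exact h0
  have e4 : η (Function.update xs i (xs j)) φs = 0 := by
    refine h3 _ _ i j hij ?_
    rw [Function.update_self, Function.update_of_ne hij.symm]
  have e5 : Function.update (Function.update xs i S) j (xs i)
      = Function.update (Function.update xs j (xs i)) i S := Function.update_comm hij _ _ _
  have e6 : η (Function.update (Function.update xs j (xs i)) i S) φs
      = η (Function.update (Function.update xs j (xs i)) i (xs i)) φs
        + η (Function.update (Function.update xs j (xs i)) i (xs j)) φs := h1 _ _ i _ _
  have e7 : η (Function.update (Function.update xs j (xs i)) i (xs i)) φs = 0 := by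
    refine h3 _ _ i j hij ?_
    rw [Function.update_self, Function.update_of_ne hij.symm, Function.update_self]
  have e8 : Function.update (Function.update xs j (xs i)) i (xs j)
      = fun m => xs (Equiv.swap i j m) := by
    funext m
    rcases eq_or_ne m i with rfl | hmi
    · rw [Function.update_self, Equiv.swap_apply_left]
    · rw [Function.update_of_ne hmi]
      rcases eq_or_ne m j with rfl | hmj
      · rw [Function.update_self, Equiv.swap_apply_right]
      · rw [Function.update_of_ne hmj, Equiv.swap_apply_of_ne_of_ne hmi hmj]
  have hA : η (Function.update (Function.update xs i S) j (xs i)) φs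
      = η (fun m => xs (Equiv.swap i j m)) φs := by
    rw [e5, e6, e7, e8, zero_add]
  have hB : η (Function.update (Function.update xs i S) j (xs j)) φs = η xs φs := by
    rw [e2, e3, e4, add_zero]
  rw [e1, hA, hB] at hu
  exact eq_neg_of_add_eq_zero_left hu

lemma perm_h {p q : ℕ} {η : Raw A h p q}
    (h1 : ∀ xs φs (i : Fin q) (x y : AH A h),
      η (Function.update xs i (x + y)) φs
        = η (Function.update xs i x) φs + η (Function.update xs i y) φs)
    (h3 : ∀ xs φs (i j : Fin q), i ≠ j → xs i = xs j → η xs φs = 0) :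
    ∀ (σ : Equiv.Perm (Fin q)) (xs : Fin q → AH A h) (φs : Fin p → AH A h),
      η (fun m => xs (σ m)) φs = (Equiv.Perm.sign σ : ℤ) • η xs φs := by
  intro σ
  refine Equiv.Perm.swap_induction_on σ ?_ ?_
  · intro xs φs; simp
  · intro f x y hxy ih xs φs
    have ih' := ih (fun t => xs (Equiv.swap x y t)) φs
    have hcomp : (fun m => xs ((Equiv.swap x y * f) m))
        = (fun m => (fun t => xs (Equiv.swap x y t)) (f m)) := rfl
    rw [hcomp, ih', swap_anti h1 h3 xs φs hxy]
    rw [Equiv.Perm.sign_mul, Equiv.Perm.sign_swap hxy]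
    simp [smul_neg]

lemma perm_K {p q : ℕ} {K : Submodule A (AH A h)} {η : Raw A h p q}
    (h6 : ∀ xs φs (k l : Fin p), (∀ m, φs m ∈ K) →
      η xs (φs ∘ (Equiv.swap k l)) = η xs φs) :
    ∀ (σ : Equiv.Perm (Fin p)) (xs : Fin q → AH A h) (φs : Fin p → AH A h),
      (∀ m, φs m ∈ K) → η xs (fun m => φs (σ m)) = η xs φs := by
  intro σ
  refine Equiv.Perm.swap_induction_on σ ?_ ?_
  · intro xs φs _; simp
  · intro f x y hxy ih xs φs hK
    have ih' := ih xs (fun t => φs (Equiv.swap x y t)) (fun m => hK _)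
    have hcomp : (fun m => φs ((Equiv.swap x y * f) m))
        = (fun m => (fun t => φs (Equiv.swap x y t)) (f m)) := rfl
    rw [hcomp, ih']
    exact h6 xs φs x y hK

end Statement16Aux
namespace Statement16Aux

variable {A : Type} [CommRing A] [Algebra ℝ A]
variable {h : Type} [LieRing h] [LieAlgebra ℝ h]

/-- The `k`-th slot substitution: on `s` use `π x`, off `s` use `x - π x`. -/
def mixS (π : AH A h →ₗ[ℝ] AH A h) {n : ℕ} (s : Finset (Fin n)) (xs : Fin n → AH A h) :
    Fin n → AH A h :=
  fun j => if j ∈ s then π (xs j) else xs j - π (xs j)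

/-- The homotopy candidate. -/
def Spi (π : AH A h →ₗ[ℝ] AH A h) {p n : ℕ} (ζ : Raw A h (p+1) n) : Raw A h p (n+1) :=
  fun xs φs => ∑ k : Fin (n+1),
    ((-1:ℝ) ^ (k:ℕ)) • ζ (xs ∘ Fin.succAbove k) (Fin.cons (π (xs k)) (fun l => π (φs l)))

/-- The "resolvent" modification of a cochain. -/
def etaPr (π : AH A h →ₗ[ℝ] AH A h) {p n : ℕ} (η : Raw A h (p+1) n) : Raw A h (p+1) n :=
  fun xs φs =>
    ∑ s : Finset (Fin n), (((p:ℝ) + 1 + (s.card : ℝ))⁻¹) • η (mixS π s xs) φs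

lemma mixS_update (π : AH A h →ₗ[ℝ] AH A h) {n : ℕ} (s : Finset (Fin n))
    (xs : Fin n → AH A h) (i : Fin n) (v : AH A h) :
    mixS π s (Function.update xs i v)
      = Function.update (mixS π s xs) i (if i ∈ s then π v else v - π v) := by
  funext j
  rcases eq_or_ne j i with rfl | hji
  · rw [Function.update_self]
    simp only [mixS, Function.update_self]
  · rw [Function.update_of_ne hji]
    simp only [mixS, Function.update_of_ne hji]

/-- pack the `h`-slots of a cochain into a multilinear map over `A`. -/
def toML {p q : ℕ} (η : Raw A h p q)
    (h1 : ∀ xs φs (i : Fin q) (x y : AH A h),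
      η (Function.update xs i (x + y)) φs
        = η (Function.update xs i x) φs + η (Function.update xs i y) φs)
    (h2 : ∀ xs φs (i : Fin q) (a : A) (x : AH A h),
      η (Function.update xs i (a • x)) φs = a * η (Function.update xs i x) φs)
    (φs : Fin p → AH A h) : MultilinearMap A (fun _ : Fin q => AH A h) A where
  toFun := fun xs => η xs φs
  map_update_add' := by
    intro inst m i x y
    rw [Subsingleton.elim inst (instDecidableEqFin q)]
    exact h1 m φs i x y
  map_update_smul' := by
    intro inst m i a x
    rw [Subsingleton.elim inst (instDecidableEqFin q)]
    rw [smul_eq_mul]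
    exact h2 m φs i a x

lemma mix_expand (π : AH A h →ₗ[ℝ] AH A h) {p q : ℕ} (η : Raw A h p q)
    (h1 : ∀ xs φs (i : Fin q) (x y : AH A h),
      η (Function.update xs i (x + y)) φs
        = η (Function.update xs i x) φs + η (Function.update xs i y) φs)
    (h2 : ∀ xs φs (i : Fin q) (a : A) (x : AH A h),
      η (Function.update xs i (a • x)) φs = a * η (Function.update xs i x) φs)
    (xs : Fin q → AH A h) (φs : Fin p → AH A h) :
    ∑ s : Finset (Fin q), η (mixS π s xs) φs = η xs φs := by
  set M := toML η h1 h2 φs with hM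
  have hsum : ((fun j => π (xs j)) + fun j => xs j - π (xs j)) = xs := by
    funext j
    simp only [Pi.add_apply]
    abel
  have hexp := M.map_add_univ (fun j => π (xs j)) (fun j => xs j - π (xs j))
  rw [hsum] at hexp
  have hpw : ∀ s : Finset (Fin q),
      s.piecewise (fun j => π (xs j)) (fun j => xs j - π (xs j)) = mixS π s xs := by
    intro s
    funext j
    by_cases hj : j ∈ s
    · rw [Finset.piecewise_eq_of_mem _ _ _ hj]
      simp [mixS, hj]
    · rw [Finset.piecewise_eq_of_notMem _ _ _ hj]
      simp [mixS, hj]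
  calc ∑ s : Finset (Fin q), η (mixS π s xs) φs
      = ∑ s : Finset (Fin q), M (s.piecewise (fun j => π (xs j)) (fun j => xs j - π (xs j))) := by
        refine Finset.sum_congr rfl fun s _ => ?_
        rw [hpw s]
        rfl
    _ = M xs := hexp.symm
    _ = η xs φs := rfl

end Statement16Aux
namespace Statement16Aux
open scoped symmDiff

variable {A : Type} [CommRing A] [Algebra ℝ A]
variable {h : Type} [LieRing h] [LieAlgebra ℝ h]

lemma mem_symmDiff_left {n : ℕ} (s : Finset (Fin n)) (i j : Fin n) :
    i ∈ s ∆ ({i, j} : Finset (Fin n)) ↔ i ∉ s := by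
  simp [Finset.mem_symmDiff]

lemma mem_symmDiff_right {n : ℕ} (s : Finset (Fin n)) (i j : Fin n) :
    j ∈ s ∆ ({i, j} : Finset (Fin n)) ↔ j ∉ s := by
  simp [Finset.mem_symmDiff]

lemma card_symmDiff_pair {n : ℕ} (s : Finset (Fin n)) {i j : Fin n} (hij : i ≠ j)
    (hi : i ∈ s) (hj : j ∉ s) :
    (s ∆ ({i, j} : Finset (Fin n))).card = s.card := by
  have hset : s ∆ ({i, j} : Finset (Fin n)) = insert j (s.erase i) := by
    ext m
    by_cases hmi : m = i
    · subst hmi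
      simp [Finset.mem_symmDiff, hi, hij]
    · by_cases hmj : m = j
      · subst hmj
        simp [Finset.mem_symmDiff, hj, Ne.symm hij]
      · simp [Finset.mem_symmDiff, hmi, hmj]
  rw [hset, Finset.card_insert_of_notMem (by simp [Finset.mem_erase, hj]),
    Finset.card_erase_of_mem hi]
  have hpos : 0 < s.card := Finset.card_pos.mpr ⟨i, hi⟩
  omega

lemma etaPr_isCochain (K : Submodule A (AH A h)) (π : AH A h →ₗ[ℝ] AH A h)
    (hπA : ∀ (a : A) (x : AH A h), π (a • x) = a • π x)
    {p n : ℕ} (η : Raw A h (p+1) n) (hc : IsCochain A h K η) :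
    IsCochain A h K (etaPr π η) := by
  obtain ⟨h1, h2, h3, h4, h5, h6⟩ := hc
  refine ⟨?_, ?_, ?_, ?_, ?_, ?_⟩
  · -- h-additivity
    intro xs φs i x y
    simp only [etaPr]
    rw [← Finset.sum_add_distrib]
    refine Finset.sum_congr rfl fun s _ => ?_
    rw [mixS_update, mixS_update, mixS_update]
    by_cases hi : i ∈ s
    · simp only [hi, if_true]
      rw [map_add, h1, smul_add]
    · simp only [hi, if_false]
      have hd : (x + y) - π (x + y) = (x - π x) + (y - π y) := by rw [map_add]; abel
      rw [hd, h1, smul_add]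
  · -- h-smul
    intro xs φs i a x
    simp only [etaPr]
    rw [Finset.mul_sum]
    refine Finset.sum_congr rfl fun s _ => ?_
    rw [mixS_update, mixS_update]
    by_cases hi : i ∈ s
    · simp only [hi, if_true]
      rw [hπA, h2, mul_smul_comm]
    · simp only [hi, if_false]
      have hd : (a • x) - π (a • x) = a • (x - π x) := by rw [hπA, smul_sub]
      rw [hd, h2, mul_smul_comm]
  · -- alternating
    intro xs φs i j hij hxs
    simp only [etaPr]
    have hzero : ∀ s : Finset (Fin n), ((i ∈ s) ↔ (j ∈ s)) → η (mixS π s xs) φs = 0 := by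
      intro s hs
      refine h3 _ _ i j hij ?_
      by_cases hi : i ∈ s
      · have hjs : j ∈ s := hs.mp hi
        simp only [mixS, hi, hjs, if_true, hxs]
      · have hjs : j ∉ s := fun hj => hi (hs.mpr hj)
        simp only [mixS, hi, hjs, if_false, hxs]
    have hfun : ∀ s : Finset (Fin n), ((i ∈ s) ↔ (j ∈ s)) → False → True := fun _ _ _ => trivial
    refine Finset.sum_ninvolution (fun s => s ∆ ({i, j} : Finset (Fin n))) ?_ ?_
      (fun s => Finset.mem_univ _) (fun s => symmDiff_symmDiff_cancel_right ({i,j} : Finset (Fin n)) s)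
    · intro s
      beta_reduce
      by_cases hiff : ((i ∈ s) ↔ (j ∈ s))
      · have hz1 : η (mixS π s xs) φs = 0 := hzero s hiff
        have hz2 : η (mixS π (s ∆ ({i, j} : Finset (Fin n))) xs) φs = 0 := by
          refine hzero _ ?_
          rw [mem_symmDiff_left, mem_symmDiff_right]
          exact not_iff_not.mpr hiff
        rw [hz1, hz2, smul_zero, smul_zero, add_zero]
      · -- exactly one of i, j in s
        have hcard : (s ∆ ({i, j} : Finset (Fin n))).card = s.card := by
          by_cases hi : i ∈ s
          · have hj : j ∉ s := fun hj => hiff (iff_of_true hi hj)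
            exact card_symmDiff_pair s hij hi hj
          · have hj : j ∈ s := by
              by_contra hj
              exact hiff (iff_of_false hi hj)
            have : s ∆ ({i, j} : Finset (Fin n)) = s ∆ ({j, i} : Finset (Fin n)) := by
              rw [Finset.pair_comm]
            rw [this]
            exact card_symmDiff_pair s (Ne.symm hij) hj hi
        have hmix : mixS π (s ∆ ({i, j} : Finset (Fin n))) xs
            = fun m => (mixS π s xs) (Equiv.swap i j m) := by
          funext m
          by_cases hmi : m = i
          · subst hmi
            rw [Equiv.swap_apply_left]
            simp only [mixS, mem_symmDiff_left]
            by_cases hi : m ∈ s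
            · have hj : j ∉ s := fun hj => hiff (iff_of_true hi hj)
              simp [hi, hj, hxs]
            · have hj : j ∈ s := by
                by_contra hj
                exact hiff (iff_of_false hi hj)
              simp [hi, hj, hxs]
          · by_cases hmj : m = j
            · subst hmj
              rw [Equiv.swap_apply_right]
              simp only [mixS, mem_symmDiff_right]
              by_cases hi : i ∈ s
              · have hj : m ∉ s := fun hj => hiff (iff_of_true hi hj)
                simp [hi, hj, hxs]
              · have hj : m ∈ s := by
                  by_contra hj
                  exact hiff (iff_of_false hi hj)
                simp [hi, hj, hxs]
            · rw [Equiv.swap_apply_of_ne_of_ne hmi hmj]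
              simp only [mixS]
              have : m ∈ s ∆ ({i, j} : Finset (Fin n)) ↔ m ∈ s := by
                simp [Finset.mem_symmDiff, hmi, hmj]
              by_cases hm : m ∈ s
              · simp [this.mpr hm, hm]
              · have hnot : m ∉ s ∆ ({i, j} : Finset (Fin n)) := fun hh => hm (this.mp hh)
                simp [hnot, hm]
        rw [hmix, hcard, swap_anti h1 h3 (mixS π s xs) φs hij, smul_neg, add_neg_cancel]
    · intro s hfs heq
      beta_reduce at heq
      have hmem := mem_symmDiff_left s i j
      rw [heq] at hmem
      tauto
  · -- K-additivity
    intro xs φs k x y hall hx hy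
    simp only [etaPr]
    rw [← Finset.sum_add_distrib]
    refine Finset.sum_congr rfl fun s _ => ?_
    rw [h4 _ _ _ _ _ hall hx hy, smul_add]
  · -- K-smul
    intro xs φs k a x hall hx
    simp only [etaPr]
    rw [Finset.mul_sum]
    refine Finset.sum_congr rfl fun s _ => ?_
    rw [h5 _ _ _ _ _ hall hx, mul_smul_comm]
  · -- K-symmetry
    intro xs φs k l hall
    simp only [etaPr]
    refine Finset.sum_congr rfl fun s _ => ?_
    rw [h6 _ _ _ _ hall]

end Statement16Aux
namespace Statement16Aux

variable {A : Type} [CommRing A] [Algebra ℝ A]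
variable {h : Type} [LieRing h] [LieAlgebra ℝ h]

lemma Spi_swap_adj (π : AH A h →ₗ[ℝ] AH A h) {p n : ℕ} {ζ : Raw A h (p+1) n}
    (h1 : ∀ xs φs (i : Fin n) (x y : AH A h),
      ζ (Function.update xs i (x + y)) φs
        = ζ (Function.update xs i x) φs + ζ (Function.update xs i y) φs)
    (h3 : ∀ xs φs (i j : Fin n), i ≠ j → xs i = xs j → ζ xs φs = 0)
    (i j : Fin (n+1)) (hj : (j:ℕ) = (i:ℕ) + 1)
    (xs : Fin (n+1) → AH A h) (φs : Fin p → AH A h) :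
    Spi π ζ (fun m => xs (Equiv.swap i j m)) φs = - Spi π ζ xs φs := by
  have hij : i ≠ j := fun e => by have := congrArg Fin.val e; omega
  have hsign : ((-1:ℝ) ^ ((j:ℕ))) = -((-1:ℝ) ^ ((i:ℕ))) := by
    rw [hj, pow_succ]; ring
  simp only [Spi]
  have hterm : ∀ k : Fin (n+1),
      ((-1:ℝ) ^ (k:ℕ)) • ζ ((fun m => xs (Equiv.swap i j m)) ∘ Fin.succAbove k)
        (Fin.cons (π ((fun m => xs (Equiv.swap i j m)) k)) (fun l => π (φs l)))
      = - (((-1:ℝ) ^ ((Equiv.swap i j k : Fin (n+1)) : ℕ)) •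
          ζ (xs ∘ Fin.succAbove (Equiv.swap i j k))
            (Fin.cons (π (xs (Equiv.swap i j k))) (fun l => π (φs l)))) := by
    intro k
    rcases eq_or_ne k i with rfl | hki
    · have hcomp : ((fun m => xs (Equiv.swap k j m)) ∘ Fin.succAbove k)
          = xs ∘ Fin.succAbove j := by
        funext m
        simp only [Function.comp_apply]
        rw [swap_succAbove_adj k j hj m]
      rw [hcomp, Equiv.swap_apply_left, hsign, neg_smul, neg_neg]
      simp only [Equiv.swap_apply_left]
    · rcases eq_or_ne k j with rfl | hkj
      · have hcomp2 : ((fun m => xs (Equiv.swap i k m)) ∘ Fin.succAbove k)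
            = xs ∘ Fin.succAbove i := by
          funext m
          simp only [Function.comp_apply]
          have hadj := swap_succAbove_adj i k hj m
          calc xs (Equiv.swap i k (Fin.succAbove k m))
              = xs (Equiv.swap i k (Equiv.swap i k (Fin.succAbove i m))) := by rw [hadj]
            _ = xs (Fin.succAbove i m) := by rw [Equiv.swap_apply_self]
        rw [hcomp2, Equiv.swap_apply_right, hsign, neg_smul]
        simp only [Equiv.swap_apply_right]
      · obtain ⟨i', hi'⟩ := Fin.exists_succAbove_eq (Ne.symm hki)
        obtain ⟨j', hj'⟩ := Fin.exists_succAbove_eq (Ne.symm hkj)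
        have hii' : i' ≠ j' := by
          intro e
          exact hij (by rw [← hi', ← hj', e])
        have hcomp3 : ((fun m => xs (Equiv.swap i j m)) ∘ Fin.succAbove k)
            = fun m => (xs ∘ Fin.succAbove k) (Equiv.swap i' j' m) := by
          funext m
          simp only [Function.comp_apply]
          rcases eq_or_ne m i' with rfl | hmi
          · rw [hi', Equiv.swap_apply_left, Equiv.swap_apply_left, hj']
          · rcases eq_or_ne m j' with rfl | hmj
            · rw [hj', Equiv.swap_apply_right, Equiv.swap_apply_right, hi']
            · have hne1 : Fin.succAbove k m ≠ i := by
                rw [← hi']; exact fun e => hmi (Fin.succAbove_right_injective e)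
              have hne2 : Fin.succAbove k m ≠ j := by
                rw [← hj']; exact fun e => hmj (Fin.succAbove_right_injective e)
              rw [Equiv.swap_apply_of_ne_of_ne hne1 hne2,
                Equiv.swap_apply_of_ne_of_ne hmi hmj]
        rw [Equiv.swap_apply_of_ne_of_ne hki hkj, hcomp3,
          swap_anti h1 h3 (xs ∘ Fin.succAbove k) _ hii', smul_neg]
        simp only [Equiv.swap_apply_of_ne_of_ne hki hkj]
  calc (∑ k : Fin (n+1),
      ((-1:ℝ) ^ (k:ℕ)) • ζ ((fun m => xs (Equiv.swap i j m)) ∘ Fin.succAbove k)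
        (Fin.cons (π ((fun m => xs (Equiv.swap i j m)) k)) (fun l => π (φs l))))
      = ∑ k : Fin (n+1), - (((-1:ℝ) ^ ((Equiv.swap i j k : Fin (n+1)) : ℕ)) •
          ζ (xs ∘ Fin.succAbove (Equiv.swap i j k))
            (Fin.cons (π (xs (Equiv.swap i j k))) (fun l => π (φs l)))) :=
        Finset.sum_congr rfl fun k _ => hterm k
    _ = - ∑ k : Fin (n+1), (((-1:ℝ) ^ ((Equiv.swap i j k : Fin (n+1)) : ℕ)) •
          ζ (xs ∘ Fin.succAbove (Equiv.swap i j k))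
            (Fin.cons (π (xs (Equiv.swap i j k))) (fun l => π (φs l)))) := by
        rw [← Finset.sum_neg_distrib]
    _ = - ∑ k : Fin (n+1), (((-1:ℝ) ^ ((k : Fin (n+1)) : ℕ)) •
          ζ (xs ∘ Fin.succAbove k)
            (Fin.cons (π (xs k)) (fun l => π (φs l)))) := by
        congr 1
        exact Fintype.sum_equiv (Equiv.swap i j) _ _ (fun k => rfl)

lemma Spi_swap (π : AH A h →ₗ[ℝ] AH A h) {p n : ℕ} {ζ : Raw A h (p+1) n}
    (h1 : ∀ xs φs (i : Fin n) (x y : AH A h),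
      ζ (Function.update xs i (x + y)) φs
        = ζ (Function.update xs i x) φs + ζ (Function.update xs i y) φs)
    (h3 : ∀ xs φs (i j : Fin n), i ≠ j → xs i = xs j → ζ xs φs = 0)
    {i j : Fin (n+1)} (hij : i ≠ j)
    (xs : Fin (n+1) → AH A h) (φs : Fin p → AH A h) :
    Spi π ζ (fun m => xs (Equiv.swap i j m)) φs = - Spi π ζ xs φs := by
  have key : ∀ d : ℕ, ∀ i j : Fin (n+1), (j:ℕ) = (i:ℕ) + d + 1 →
      ∀ (xs : Fin (n+1) → AH A h) (φs : Fin p → AH A h),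
      Spi π ζ (fun m => xs (Equiv.swap i j m)) φs = - Spi π ζ xs φs := by
    intro d
    induction d with
    | zero =>
      intro i j hj xs φs
      exact Spi_swap_adj π h1 h3 i j (by omega) xs φs
    | succ d ih =>
      intro i j hj xs φs
      have hjlt : (i:ℕ) + d + 1 < n+1 := by have := j.isLt; omega
      set a : Fin (n+1) := ⟨(i:ℕ) + d + 1, hjlt⟩ with ha
      have hia : (a:ℕ) = (i:ℕ) + d + 1 := rfl
      have hija : i ≠ a := fun e => by have := congrArg Fin.val e; omega
      have haj : (j:ℕ) = (a:ℕ) + 1 := by omega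
      have hanej : a ≠ j := fun e => by have := congrArg Fin.val e; omega
      have hine : i ≠ j := fun e => by have := congrArg Fin.val e; omega
      have hpt : ∀ m, Equiv.swap a j (Equiv.swap i a (Equiv.swap a j m)) = Equiv.swap i j m := by
        intro m
        rcases eq_or_ne m i with rfl | hmi
        · rw [Equiv.swap_apply_of_ne_of_ne hija hine, Equiv.swap_apply_left,
            Equiv.swap_apply_left, Equiv.swap_apply_left]
        · rcases eq_or_ne m a with rfl | hma
          · rw [Equiv.swap_apply_left, Equiv.swap_apply_of_ne_of_ne (Ne.symm hine) (Ne.symm hanej),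
              Equiv.swap_apply_right, Equiv.swap_apply_of_ne_of_ne (Ne.symm hija) hanej]
          · rcases eq_or_ne m j with rfl | hmj
            · rw [Equiv.swap_apply_right, Equiv.swap_apply_right,
                Equiv.swap_apply_of_ne_of_ne hija hine, Equiv.swap_apply_right]
            · rw [Equiv.swap_apply_of_ne_of_ne hma hmj, Equiv.swap_apply_of_ne_of_ne hmi hma,
                Equiv.swap_apply_of_ne_of_ne hma hmj, Equiv.swap_apply_of_ne_of_ne hmi hmj]
      have e3 : Spi π ζ (fun u => xs (Equiv.swap a j u)) φs = - Spi π ζ xs φs :=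
        Spi_swap_adj π h1 h3 a j haj xs φs
      have e2 : Spi π ζ (fun t => xs (Equiv.swap a j (Equiv.swap i a t))) φs
          = - Spi π ζ (fun u => xs (Equiv.swap a j u)) φs :=
        ih i a hia (fun u => xs (Equiv.swap a j u)) φs
      have e1 : Spi π ζ (fun m => xs (Equiv.swap a j (Equiv.swap i a (Equiv.swap a j m)))) φs
          = - Spi π ζ (fun t => xs (Equiv.swap a j (Equiv.swap i a t))) φs :=
        Spi_swap_adj π h1 h3 a j haj (fun t => xs (Equiv.swap a j (Equiv.swap i a t))) φs
      have hfun : (fun m => xs (Equiv.swap i j m))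
          = (fun m => xs (Equiv.swap a j (Equiv.swap i a (Equiv.swap a j m)))) := by
        funext m; rw [hpt m]
      rw [hfun, e1, e2, e3, neg_neg]
  rcases Nat.lt_or_ge (i:ℕ) (j:ℕ) with hlt | hge
  · exact key ((j:ℕ) - (i:ℕ) - 1) i j (by omega) xs φs
  · have hlt' : (j:ℕ) < (i:ℕ) := by
      rcases Nat.lt_or_ge (j:ℕ) (i:ℕ) with h' | h'
      · exact h'
      · exact absurd (Fin.ext (by omega : (i:ℕ) = (j:ℕ))) hij
    have hsw : (fun m => xs (Equiv.swap i j m)) = (fun m => xs (Equiv.swap j i m)) := by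
      funext m; rw [Equiv.swap_comm]
    rw [hsw]
    exact key ((i:ℕ) - (j:ℕ) - 1) j i (by omega) xs φs

end Statement16Aux
namespace Statement16Aux

variable {A : Type} [CommRing A] [Algebra ℝ A]
variable {h : Type} [LieRing h] [LieAlgebra ℝ h]

lemma Spi_isCochain (K : Submodule A (AH A h)) (π : AH A h →ₗ[ℝ] AH A h)
    (hπK : ∀ x, π x ∈ K) (hπA : ∀ (a : A) (x : AH A h), π (a • x) = a • π x)
    {p n : ℕ} (ζ : Raw A h (p+1) n) (hc : IsCochain A h K ζ) :
    IsCochain A h K (Spi π ζ) := by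
  obtain ⟨h1, h2, h3, h4, h5, h6⟩ := hc
  refine ⟨?_, ?_, ?_, ?_, ?_, ?_⟩
  · -- additivity in the h-slots
    intro xs φs i x y
    simp only [Spi]
    rw [← Finset.sum_add_distrib]
    refine Finset.sum_congr rfl fun k _ => ?_
    rcases eq_or_ne k i with rfl | hki
    · have hcupd : ∀ v : AH A h, Function.update xs k v ∘ Fin.succAbove k
          = xs ∘ Fin.succAbove k := by
        intro v; funext m
        simp only [Function.comp_apply]
        rw [Function.update_of_ne (Fin.succAbove_ne k m)]
      simp only [hcupd, Function.update_self]
      have hmem : ∀ l, (Fin.cons (π x) (fun l => π (φs l)) : Fin (p+1) → AH A h) l ∈ K :=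
        consK (hπK x) (fun l => hπK (φs l))
      have hadd := h4 (xs ∘ Fin.succAbove k) (Fin.cons (π x) (fun l => π (φs l))) 0
        (π x) (π y) hmem (hπK x) (hπK y)
      rw [Fin.update_cons_zero, Fin.update_cons_zero, Fin.update_cons_zero] at hadd
      rw [map_add, hadd, smul_add]
    · obtain ⟨i', hi'⟩ := Fin.exists_succAbove_eq (Ne.symm hki)
      have hcupd : ∀ v : AH A h, Function.update xs i v ∘ Fin.succAbove k
          = Function.update (xs ∘ Fin.succAbove k) i' v := by
        intro v
        rw [← hi']
        exact Function.update_comp_eq_of_injective xs Fin.succAbove_right_injective i' v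
      have hval : ∀ v : AH A h, Function.update xs i v k = xs k :=
        fun v => Function.update_of_ne hki v xs
      simp only [hcupd, hval]
      rw [h1 (xs ∘ Fin.succAbove k) _ i' x y, smul_add]
  · -- smul in the h-slots
    intro xs φs i a x
    simp only [Spi]
    rw [Finset.mul_sum]
    refine Finset.sum_congr rfl fun k _ => ?_
    rcases eq_or_ne k i with rfl | hki
    · have hcupd : ∀ v : AH A h, Function.update xs k v ∘ Fin.succAbove k
          = xs ∘ Fin.succAbove k := by
        intro v; funext m
        simp only [Function.comp_apply]
        rw [Function.update_of_ne (Fin.succAbove_ne k m)]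
      simp only [hcupd, Function.update_self]
      have hmem : ∀ l, (Fin.cons (π x) (fun l => π (φs l)) : Fin (p+1) → AH A h) l ∈ K :=
        consK (hπK x) (fun l => hπK (φs l))
      have hsm := h5 (xs ∘ Fin.succAbove k) (Fin.cons (π x) (fun l => π (φs l))) 0
        a (π x) hmem (hπK x)
      rw [Fin.update_cons_zero, Fin.update_cons_zero] at hsm
      rw [hπA, hsm, mul_smul_comm]
    · obtain ⟨i', hi'⟩ := Fin.exists_succAbove_eq (Ne.symm hki)
      have hcupd : ∀ v : AH A h, Function.update xs i v ∘ Fin.succAbove k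
          = Function.update (xs ∘ Fin.succAbove k) i' v := by
        intro v
        rw [← hi']
        exact Function.update_comp_eq_of_injective xs Fin.succAbove_right_injective i' v
      have hval : ∀ v : AH A h, Function.update xs i v k = xs k :=
        fun v => Function.update_of_ne hki v xs
      simp only [hcupd, hval]
      rw [h2 (xs ∘ Fin.succAbove k) _ i' a x, mul_smul_comm]
  · -- alternating in the h-slots
    intro xs φs i j hij hxs
    have hfix : (fun m => xs (Equiv.swap i j m)) = xs := by
      funext m
      rcases eq_or_ne m i with rfl | hmi
      · rw [Equiv.swap_apply_left]; exact hxs.symm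
      · rcases eq_or_ne m j with rfl | hmj
        · rw [Equiv.swap_apply_right]; exact hxs
        · rw [Equiv.swap_apply_of_ne_of_ne hmi hmj]
    have hneg := Spi_swap π h1 h3 hij xs φs
    rw [hfix] at hneg
    exact eq_zero_of_self_eq_neg hneg
  · -- additivity in K-slots
    intro xs φs k x y hall hx hy
    simp only [Spi]
    rw [← Finset.sum_add_distrib]
    refine Finset.sum_congr rfl fun k' _ => ?_
    have hψ : ∀ v : AH A h, (fun l => π (Function.update φs k v l))
        = Function.update (fun l => π (φs l)) k (π v) := by
      intro v; funext l
      exact Function.apply_update (fun _ t => π t) φs k v l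
    have hmem : ∀ l, (Fin.cons (π (xs k')) (fun l => π (φs l)) : Fin (p+1) → AH A h) l ∈ K :=
      consK (hπK (xs k')) (fun l => hπK (φs l))
    have hadd := h4 (xs ∘ Fin.succAbove k') (Fin.cons (π (xs k')) (fun l => π (φs l)))
      k.succ (π x) (π y) hmem (hπK x) (hπK y)
    rw [← Fin.cons_update, ← Fin.cons_update, ← Fin.cons_update] at hadd
    rw [hψ, hψ, hψ, map_add, hadd, smul_add]
  · -- smul in K-slots
    intro xs φs k a x hall hx
    simp only [Spi]
    rw [Finset.mul_sum]
    refine Finset.sum_congr rfl fun k' _ => ?_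
    have hψ : ∀ v : AH A h, (fun l => π (Function.update φs k v l))
        = Function.update (fun l => π (φs l)) k (π v) := by
      intro v; funext l
      exact Function.apply_update (fun _ t => π t) φs k v l
    have hmem : ∀ l, (Fin.cons (π (xs k')) (fun l => π (φs l)) : Fin (p+1) → AH A h) l ∈ K :=
      consK (hπK (xs k')) (fun l => hπK (φs l))
    have hsm := h5 (xs ∘ Fin.succAbove k') (Fin.cons (π (xs k')) (fun l => π (φs l)))
      k.succ a (π x) hmem (hπK x)
    rw [← Fin.cons_update, ← Fin.cons_update] at hsm
    rw [hψ, hψ, hπA, hsm, mul_smul_comm]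
  · -- symmetry in K-slots
    intro xs φs k l hall
    simp only [Spi]
    refine Finset.sum_congr rfl fun k' _ => ?_
    have hψs : (fun t => π ((φs ∘ (Equiv.swap k l)) t))
        = ((fun t => π (φs t)) ∘ (Equiv.swap k l)) := rfl
    have hmem : ∀ t, (Fin.cons (π (xs k')) (fun t => π (φs t)) : Fin (p+1) → AH A h) t ∈ K :=
      consK (hπK (xs k')) (fun t => hπK (φs t))
    rw [hψs, ← cons_comp_swap_succ, h6 (xs ∘ Fin.succAbove k') _ k.succ l.succ hmem]

end Statement16Aux
namespace Statement16Aux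

variable {A : Type} [CommRing A] [Algebra ℝ A]
variable {h : Type} [LieRing h] [LieAlgebra ℝ h]

lemma smul_isCochain (K : Submodule A (AH A h)) {p q : ℕ} (c : ℝ) (η : Raw A h p q)
    (hc : IsCochain A h K η) : IsCochain A h K (fun xs φs => c • η xs φs) := by
  obtain ⟨h1, h2, h3, h4, h5, h6⟩ := hc
  refine ⟨?_, ?_, ?_, ?_, ?_, ?_⟩
  · intro xs φs i x y; beta_reduce; rw [h1 _ _ i x y, smul_add]
  · intro xs φs i a x; beta_reduce; rw [h2 _ _ i a x, mul_smul_comm]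
  · intro xs φs i j hij hxs; beta_reduce; rw [h3 _ _ i j hij hxs, smul_zero]
  · intro xs φs k x y hall hx hy; beta_reduce; rw [h4 _ _ k x y hall hx hy, smul_add]
  · intro xs φs k a x hall hx; beta_reduce; rw [h5 _ _ k a x hall hx, mul_smul_comm]
  · intro xs φs k l hall; beta_reduce; rw [h6 _ _ k l hall]

lemma cons_to_update {r n : ℕ} {ζ : Raw A h r (n+1)}
    (h1 : ∀ xs φs (i : Fin (n+1)) (x y : AH A h),
      ζ (Function.update xs i (x + y)) φs
        = ζ (Function.update xs i x) φs + ζ (Function.update xs i y) φs)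
    (h3 : ∀ xs φs (i j : Fin (n+1)), i ≠ j → xs i = xs j → ζ xs φs = 0)
    (xs : Fin (n+1) → AH A h) (φs : Fin r → AH A h) (k : Fin (n+1)) (y : AH A h) :
    ((-1:ℝ) ^ (k:ℕ)) • ζ (Fin.cons y (xs ∘ Fin.succAbove k)) φs
      = ζ (Function.update xs k y) φs := by
  have hfun : (Fin.cons y (xs ∘ Fin.succAbove k) : Fin (n+1) → AH A h)
      = fun m => (Function.update xs k y) ((Fin.cycleRange k).symm m) := by
    funext m
    refine Fin.cases ?_ ?_ m
    · rw [Fin.cycleRange_symm_zero, Function.update_self, Fin.cons_zero]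
    · intro t
      rw [Fin.cycleRange_symm_succ, Fin.cons_succ,
        Function.update_of_ne (Fin.succAbove_ne k t)]
      rfl
  rw [hfun]
  have hperm := perm_h h1 h3 ((Fin.cycleRange k).symm) (Function.update xs k y) φs
  rw [hperm, Equiv.Perm.sign_symm, Fin.sign_cycleRange]
  simp only [Units.val_pow_eq_pow_val, Units.val_neg, Units.val_one]
  rw [← Int.cast_smul_eq_zsmul ℝ]
  push_cast
  rw [smul_smul, ← mul_pow]
  norm_num

lemma cons_self_perm {r n : ℕ} {K : Submodule A (AH A h)} {ζ : Raw A h (r+1) n}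
    (h6 : ∀ xs φs (k l : Fin (r+1)), (∀ m, φs m ∈ K) →
      ζ xs (φs ∘ (Equiv.swap k l)) = ζ xs φs)
    (xs : Fin n → AH A h) (φs : Fin (r+1) → AH A h) (hall : ∀ l, φs l ∈ K) (i : Fin (r+1)) :
    ζ xs (Fin.cons (φs i) (φs ∘ Fin.succAbove i)) = ζ xs φs := by
  have hfun : (Fin.cons (φs i) (φs ∘ Fin.succAbove i) : Fin (r+1) → AH A h)
      = fun m => φs ((Fin.cycleRange i).symm m) := by
    funext m
    refine Fin.cases ?_ ?_ m
    · rw [Fin.cycleRange_symm_zero, Fin.cons_zero]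
    · intro t; rw [Fin.cycleRange_symm_succ, Fin.cons_succ]; rfl
  rw [hfun]
  exact perm_K h6 ((Fin.cycleRange i).symm) xs φs hall

lemma etaPr_closed (K : Submodule A (AH A h)) (π : AH A h →ₗ[ℝ] AH A h)
    (hπι : ∀ x ∈ K, π x = x)
    {p q : ℕ} (η : Raw A h (p+1) (q+1))
    (h2 : ∀ xs φs (i : Fin (q+1)) (a : A) (x : AH A h),
      η (Function.update xs i (a • x)) φs = a * η (Function.update xs i x) φs)
    (hcl : ∀ (xs : Fin q → AH A h) (φs : Fin (p+2) → AH A h), (∀ l, φs l ∈ K) →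
      D2 A h η xs φs = 0)
    (ys : Fin q → AH A h) (Φ : Fin (p+2) → AH A h) (hΦ : ∀ l, Φ l ∈ K) :
    D2 A h (etaPr π η) ys Φ = 0 := by
  simp only [D2, etaPr]
  rw [Finset.sum_comm]
  refine Finset.sum_eq_zero fun s _ => ?_
  by_cases h0 : (0 : Fin (q+1)) ∈ s
  · have hmix : ∀ i : Fin (p+2), mixS π s (Fin.cons (Φ i) ys)
        = Fin.cons (Φ i) (mixS π (Finset.univ.filter (fun m : Fin q => m.succ ∈ s)) ys) := by
      intro i
      funext m
      refine Fin.cases ?_ ?_ m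
      · simp only [mixS, Fin.cons_zero, h0, if_true]
        exact hπι _ (hΦ i)
      · intro t
        simp only [mixS, Fin.cons_succ, Finset.mem_filter, Finset.mem_univ, true_and]
    calc ∑ i : Fin (p+2), ((p:ℝ) + 1 + (s.card : ℝ))⁻¹ •
          η (mixS π s (Fin.cons (Φ i) ys)) (Φ ∘ Fin.succAbove i)
        = ((p:ℝ) + 1 + (s.card : ℝ))⁻¹ • ∑ i : Fin (p+2),
            η (Fin.cons (Φ i) (mixS π (Finset.univ.filter (fun m : Fin q => m.succ ∈ s)) ys))
              (Φ ∘ Fin.succAbove i) := by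
          rw [Finset.smul_sum]
          exact Finset.sum_congr rfl fun i _ => by rw [hmix i]
      _ = 0 := by
          have hzz := hcl (mixS π (Finset.univ.filter (fun m : Fin q => m.succ ∈ s)) ys) Φ hΦ
          simp only [D2] at hzz
          rw [hzz, smul_zero]
  · refine Finset.sum_eq_zero fun i _ => ?_
    have hzero : mixS π s (Fin.cons (Φ i) ys) 0 = 0 := by
      simp only [mixS, h0, if_false, Fin.cons_zero]
      rw [hπι _ (hΦ i), sub_self]
    rw [slot_zero h2 _ _ 0 hzero, smul_zero]

lemma etaPr_Tsum (K : Submodule A (AH A h)) (π : AH A h →ₗ[ℝ] AH A h)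
    (hπK : ∀ x, π x ∈ K) (hπι : ∀ x ∈ K, π x = x)
    {p n : ℕ} (η : Raw A h (p+1) n)
    (h2 : ∀ xs φs (i : Fin n) (a : A) (x : AH A h),
      η (Function.update xs i (a • x)) φs = a * η (Function.update xs i x) φs)
    (xs : Fin n → AH A h) (φs : Fin (p+1) → AH A h) :
    ∑ k : Fin n, etaPr π η (Function.update xs k (π (xs k))) φs
      = ∑ s : Finset (Fin n),
          (((s.card : ℝ)) * (((p:ℝ) + 1 + (s.card:ℝ))⁻¹)) • η (mixS π s xs) φs := by
  simp only [etaPr]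
  rw [Finset.sum_comm]
  refine Finset.sum_congr rfl fun s _ => ?_
  have hterm : ∀ k : Fin n, η (mixS π s (Function.update xs k (π (xs k)))) φs
      = if k ∈ s then η (mixS π s xs) φs else 0 := by
    intro k
    rw [mixS_update]
    by_cases hk : k ∈ s
    · simp only [hk, if_true]
      rw [hπι (π (xs k)) (hπK (xs k))]
      have hv : mixS π s xs k = π (xs k) := by simp [mixS, hk]
      rw [← hv, Function.update_eq_self]
    · simp only [hk, if_false]
      rw [hπι (π (xs k)) (hπK (xs k)), sub_self]
      exact slot_zero h2 _ _ k (Function.update_self k 0 (mixS π s xs))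
  calc ∑ k : Fin n, ((p:ℝ) + 1 + (s.card : ℝ))⁻¹ •
        η (mixS π s (Function.update xs k (π (xs k)))) φs
      = ((p:ℝ) + 1 + (s.card : ℝ))⁻¹ •
          ∑ k : Fin n, (if k ∈ s then η (mixS π s xs) φs else 0) := by
        rw [Finset.smul_sum]
        exact Finset.sum_congr rfl fun k _ => by rw [hterm k]
    _ = ((p:ℝ) + 1 + (s.card : ℝ))⁻¹ • ((s.card) • η (mixS π s xs) φs) := by
        rw [Finset.sum_ite_mem, Finset.univ_inter, Finset.sum_const]
    _ = (((s.card : ℝ)) * (((p:ℝ) + 1 + (s.card:ℝ))⁻¹)) • η (mixS π s xs) φs := by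
        rw [← Nat.cast_smul_eq_nsmul ℝ, smul_smul, mul_comm]

lemma star (K : Submodule A (AH A h)) (π : AH A h →ₗ[ℝ] AH A h)
    (hπK : ∀ x, π x ∈ K) (hπι : ∀ x ∈ K, π x = x)
    {p q : ℕ} (ζ : Raw A h (p+1) (q+1))
    (hcl : ∀ (ys : Fin q → AH A h) (Φ : Fin (p+2) → AH A h), (∀ l, Φ l ∈ K) →
      D2 A h ζ ys Φ = 0)
    (xs : Fin (q+1) → AH A h) (φs : Fin (p+1) → AH A h) (hφ : ∀ l, φs l ∈ K) :
    D2 A h (Spi π ζ) xs φs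
      = (∑ i : Fin (p+1), ζ xs (Fin.cons (φs i) (φs ∘ Fin.succAbove i)))
        + ∑ k : Fin (q+1), ((-1:ℝ) ^ (k:ℕ)) •
            ζ (Fin.cons (π (xs k)) (xs ∘ Fin.succAbove k)) φs := by
  have hπφ : ∀ i : Fin (p+1), (fun l => π ((φs ∘ Fin.succAbove i) l)) = φs ∘ Fin.succAbove i := by
    intro i; funext l
    exact hπι _ (hφ _)
  have hL : D2 A h (Spi π ζ) xs φs
      = ∑ i : Fin (p+1), (ζ xs (Fin.cons (φs i) (φs ∘ Fin.succAbove i))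
          + ∑ j : Fin (q+1), (-((-1:ℝ) ^ (j:ℕ))) •
              ζ (Fin.cons (φs i) (xs ∘ Fin.succAbove j))
                (Fin.cons (π (xs j)) (φs ∘ Fin.succAbove i))) := by
    simp only [D2, Spi]
    refine Finset.sum_congr rfl fun i _ => ?_
    rw [Fin.sum_univ_succ]
    congr 1
    · rw [hπφ i, cons_comp_succAbove_zero]
      simp only [Fin.val_zero, pow_zero, one_smul, Fin.cons_zero]
      rw [hπι _ (hφ i)]
    · refine Finset.sum_congr rfl fun j _ => ?_
      rw [hπφ i, cons_comp_succAbove_succ]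
      simp only [Fin.cons_succ, Fin.val_succ]
      rw [pow_succ, mul_neg_one]
  have hcl' : ∀ k : Fin (q+1),
      ζ (Fin.cons (π (xs k)) (xs ∘ Fin.succAbove k)) φs
        = - ∑ m : Fin (p+1), ζ (Fin.cons (φs m) (xs ∘ Fin.succAbove k))
            (Fin.cons (π (xs k)) (φs ∘ Fin.succAbove m)) := by
    intro k
    have h0 := hcl (xs ∘ Fin.succAbove k) (Fin.cons (π (xs k)) φs) (consK (hπK _) hφ)
    simp only [D2] at h0
    rw [Fin.sum_univ_succ] at h0
    simp only [Fin.cons_zero, Fin.cons_succ] at h0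
    rw [cons_comp_succAbove_zero] at h0
    have hc2 : ∀ m : Fin (p+1), (Fin.cons (π (xs k)) φs : Fin (p+2) → AH A h) ∘ Fin.succAbove m.succ
        = Fin.cons (π (xs k)) (φs ∘ Fin.succAbove m) := fun m => cons_comp_succAbove_succ _ _ m
    simp only [hc2] at h0
    exact eq_neg_of_add_eq_zero_left h0
  rw [hL, Finset.sum_add_distrib]
  congr 1
  rw [Finset.sum_comm]
  refine Finset.sum_congr rfl fun j _ => ?_
  rw [hcl' j, smul_neg, Finset.smul_sum, ← Finset.sum_neg_distrib]
  exact Finset.sum_congr rfl fun m _ => neg_smul _ _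

end Statement16Aux
namespace Statement16Aux

variable {A : Type} [CommRing A] [Algebra ℝ A]
variable {h : Type} [LieRing h] [LieAlgebra ℝ h]

lemma part1 (K : Submodule A (AH A h)) (π : AH A h →ₗ[ℝ] AH A h)
    (hπK : ∀ x, π x ∈ K) (hπA : ∀ (a : A) (x : AH A h), π (a • x) = a • π x)
    (hπι : ∀ x ∈ K, π x = x)
    {p q : ℕ} (η : Raw A h (p+1) (q+1)) (hc : IsCochain A h K η)
    (hcl : ∀ (xs : Fin q → AH A h) (φs : Fin (p+2) → AH A h), (∀ l, φs l ∈ K) →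
      D2 A h η xs φs = 0) :
    ∃ ρ : Raw A h p (q+2), IsCochain A h K ρ ∧
      ∀ (xs : Fin (q+1) → AH A h) (φs : Fin (p+1) → AH A h), (∀ l, φs l ∈ K) →
        D2 A h ρ xs φs = η xs φs := by
  have hc' : IsCochain A h K (etaPr π η) := etaPr_isCochain K π hπA η hc
  obtain ⟨h1, h2, h3, h4, h5, h6⟩ := hc
  obtain ⟨g1, g2, g3, g4, g5, g6⟩ := id hc'
  refine ⟨Spi π (etaPr π η), Spi_isCochain K π hπK hπA _ hc', ?_⟩
  intro xs φs hφ
  have hclP : ∀ (ys : Fin q → AH A h) (Φ : Fin (p+2) → AH A h), (∀ l, Φ l ∈ K) →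
      D2 A h (etaPr π η) ys Φ = 0 :=
    fun ys Φ hΦ => etaPr_closed K π hπι η h2 hcl ys Φ hΦ
  rw [star K π hπK hπι (etaPr π η) hclP xs φs hφ]
  have hfirst : ∑ i : Fin (p+1), etaPr π η xs (Fin.cons (φs i) (φs ∘ Fin.succAbove i))
      = ∑ _i : Fin (p+1), etaPr π η xs φs :=
    Finset.sum_congr rfl fun i _ => cons_self_perm g6 xs φs hφ i
  rw [hfirst, Finset.sum_const, Finset.card_univ, Fintype.card_fin]
  have hsecond : ∑ k : Fin (q+1), ((-1:ℝ) ^ (k:ℕ)) •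
      etaPr π η (Fin.cons (π (xs k)) (xs ∘ Fin.succAbove k)) φs
      = ∑ k : Fin (q+1), etaPr π η (Function.update xs k (π (xs k))) φs :=
    Finset.sum_congr rfl fun k _ => cons_to_update g1 g3 xs φs k (π (xs k))
  rw [hsecond, etaPr_Tsum K π hπK hπι η h2 xs φs]
  rw [← Nat.cast_smul_eq_nsmul ℝ (p+1) (etaPr π η xs φs)]
  simp only [etaPr]
  rw [Finset.smul_sum, ← Finset.sum_add_distrib]
  have hfin : ∀ s : Finset (Fin (q+1)),
      ((p+1 : ℕ) : ℝ) • (((p:ℝ) + 1 + (s.card:ℝ))⁻¹ • η (mixS π s xs) φs)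
        + ((s.card:ℝ) * (((p:ℝ)+1+(s.card:ℝ))⁻¹)) • η (mixS π s xs) φs
      = η (mixS π s xs) φs := by
    intro s
    rw [smul_smul, ← add_smul]
    have hne : ((p:ℝ) + 1 + (s.card:ℝ)) ≠ 0 := by positivity
    have hco : ((p+1 : ℕ):ℝ) * (((p:ℝ)+1+(s.card:ℝ))⁻¹)
        + (s.card:ℝ) * (((p:ℝ)+1+(s.card:ℝ))⁻¹) = 1 := by
      push_cast
      field_simp
    rw [hco, one_smul]
  rw [Finset.sum_congr rfl (fun s _ => hfin s)]
  exact mix_expand π η h1 h2 xs φs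

lemma part2 (K : Submodule A (AH A h)) (π : AH A h →ₗ[ℝ] AH A h)
    (hπK : ∀ x, π x ∈ K) (hπA : ∀ (a : A) (x : AH A h), π (a • x) = a • π x)
    (hπι : ∀ x ∈ K, π x = x)
    {p : ℕ} (η : Raw A h (p+1) 0) (hc : IsCochain A h K η) :
    ∃ ρ : Raw A h p 1, IsCochain A h K ρ ∧
      ∀ (xs : Fin 0 → AH A h) (φs : Fin (p+1) → AH A h), (∀ l, φs l ∈ K) →
        D2 A h ρ xs φs = η xs φs := by
  have h6 := hc.2.2.2.2.2
  have hc' : IsCochain A h K (fun xs φs => ((p:ℝ)+1)⁻¹ • η xs φs) := by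
    have := smul_isCochain K (((p:ℝ)+1)⁻¹) η hc
    exact this
  refine ⟨Spi π (fun xs φs => ((p:ℝ)+1)⁻¹ • η xs φs),
    Spi_isCochain K π hπK hπA _ hc', ?_⟩
  intro xs φs hφ
  simp only [D2, Spi]
  have hterm : ∀ i : Fin (p+1),
      (∑ k : Fin 1, ((-1:ℝ) ^ (k:ℕ)) •
        (((p:ℝ)+1)⁻¹ • η ((Fin.cons (φs i) xs : Fin 1 → AH A h) ∘ Fin.succAbove k)
          (Fin.cons (π ((Fin.cons (φs i) xs : Fin 1 → AH A h) k))
            (fun l => π ((φs ∘ Fin.succAbove i) l)))))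
      = ((p:ℝ)+1)⁻¹ • η xs φs := by
    intro i
    rw [Fin.sum_univ_one]
    have hπφ : (fun l => π ((φs ∘ Fin.succAbove i) l)) = φs ∘ Fin.succAbove i := by
      funext l; exact hπι _ (hφ _)
    rw [hπφ]
    rw [fin0_eq ((Fin.cons (φs i) xs : Fin 1 → AH A h) ∘ Fin.succAbove (0 : Fin 1)) xs]
    simp only [Fin.cons_zero, Fin.val_zero, pow_zero, one_smul]
    rw [hπι _ (hφ i)]
    rw [cons_self_perm h6 xs φs hφ i]
  rw [Finset.sum_congr rfl (fun i _ => hterm i)]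
  rw [Finset.sum_const, Finset.card_univ, Fintype.card_fin,
    ← Nat.cast_smul_eq_nsmul ℝ (p+1), smul_smul]
  have hco : ((p+1 : ℕ):ℝ) * (((p:ℝ)+1)⁻¹) = 1 := by
    have hne : ((p:ℝ) + 1) ≠ 0 := by positivity
    push_cast
    field_simp
  rw [hco, one_smul]

lemma part3 (K : Submodule A (AH A h)) {q : ℕ} (η : Raw A h 0 (q+1))
    (hc : IsCochain A h K η) :
    (∀ (xs : Fin q → AH A h) (φs : Fin 1 → AH A h), (∀ l, φs l ∈ K) →
        D2 A h η xs φs = 0) ↔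
      (∀ xs : Fin (q+1) → AH A h, (∃ i, xs i ∈ K) → η xs (fun i => i.elim0) = 0) := by
  obtain ⟨h1, h2, h3, h4, h5, h6⟩ := hc
  constructor
  · rintro hcl xs ⟨i, hi⟩
    have C0 : ∀ ys : Fin (q+1) → AH A h, ys 0 ∈ K → η ys (fun i => i.elim0) = 0 := by
      intro ys h0
      have hd := hcl (fun m => ys m.succ) (fun _ => ys 0) (fun l => h0)
      simp only [D2] at hd
      rw [Fin.sum_univ_one] at hd
      have hcons : (Fin.cons ((fun _ : Fin 1 => ys 0) 0) (fun m => ys m.succ)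
          : Fin (q+1) → AH A h) = ys := by
        funext m
        refine Fin.cases ?_ ?_ m
        · rw [Fin.cons_zero]
        · intro t; rw [Fin.cons_succ]
      rw [hcons] at hd
      have harg : η ys (fun i : Fin 0 => i.elim0)
          = η ys ((fun _ : Fin 1 => ys 0) ∘ Fin.succAbove (0 : Fin 1)) :=
        congrArg (η ys) (fin0_eq _ _)
      rw [harg]
      exact hd
    rcases eq_or_ne i 0 with rfl | hi0
    · exact C0 xs hi
    · have hsw := swap_anti h1 h3 xs (fun i : Fin 0 => i.elim0) (Ne.symm hi0)
      have h0' : (fun m => xs (Equiv.swap (0 : Fin (q+1)) i m)) 0 ∈ K := by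
        simpa [Equiv.swap_apply_left] using hi
      have hz := C0 (fun m => xs (Equiv.swap (0 : Fin (q+1)) i m)) h0'
      have hneg : -η xs (fun i : Fin 0 => i.elim0) = 0 := by
        rw [← hsw]; exact hz
      exact neg_eq_zero.mp hneg
  · intro hv xs φs hφ
    simp only [D2]
    rw [Fin.sum_univ_one]
    have hz := hv (Fin.cons (φs 0) xs) ⟨0, by rw [Fin.cons_zero]; exact hφ 0⟩
    have harg : η (Fin.cons (φs 0) xs) (φs ∘ Fin.succAbove (0 : Fin 1))
        = η (Fin.cons (φs 0) xs) (fun i : Fin 0 => i.elim0) :=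
      congrArg _ (fin0_eq _ _)
    rw [harg]
    exact hz

end Statement16Aux
theorem statement16
    [FiniteDimensional ℝ h]
    -- h acts on A by derivations
    (act : h →ₗ[ℝ] Module.End ℝ A)
    (hact_der : ∀ (ξ : h) (f g : A), act ξ (f * g) = act ξ f * g + f * act ξ g)
    (hact_brk : ∀ ξ ν : h, act ⁅ξ, ν⁆ = act ξ ∘ₗ act ν - act ν ∘ₗ act ξ)
    -- K is an A-submodule of A ⊗ h stable under the h-action
    (K : Submodule A (AH A h))
    (hK : ∀ (ξ : h) (x : AH A h), x ∈ K → repAH A h act ((1 : A) ⊗ₜ[ℝ] ξ) x ∈ K)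
    -- an A-module retraction π : A ⊗ h → K of the inclusion ι : K → A ⊗ h
    (π : AH A h →ₗ[ℝ] AH A h)
    (hπK : ∀ x, π x ∈ K) (hπA : ∀ (a : A) (x : AH A h), π (a • x) = a • π x)
    (hπι : ∀ x ∈ K, π x = x) :
    -- for p > 0 every D₂-closed cochain is a D₂-coboundary …
    (∀ (p q : ℕ) (η : Raw A h (p + 1) (q + 1)), IsCochain A h K η →
      (∀ (xs : Fin q → AH A h) (φs : Fin (p + 2) → AH A h), (∀ l, φs l ∈ K) →
        D2 A h η xs φs = 0) →
      ∃ ρ : Raw A h p (q + 2), IsCochain A h K ρ ∧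
        ∀ (xs : Fin (q + 1) → AH A h) (φs : Fin (p + 1) → AH A h), (∀ l, φs l ∈ K) →
          D2 A h ρ xs φs = η xs φs) ∧
    -- (the same in the edge case q = 0, where D₂-closedness is automatic) …
    (∀ (p : ℕ) (η : Raw A h (p + 1) 0), IsCochain A h K η →
      ∃ ρ : Raw A h p 1, IsCochain A h K ρ ∧
        ∀ (xs : Fin 0 → AH A h) (φs : Fin (p + 1) → AH A h), (∀ l, φs l ∈ K) →
          D2 A h ρ xs φs = η xs φs) ∧
    -- … and in degree p = 0 the kernel of D₂ consists exactly of those cochains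
    -- whose (extended) h-slots kill every argument from ι(K):
    (∀ (q : ℕ) (η : Raw A h 0 (q + 1)), IsCochain A h K η →
      ((∀ (xs : Fin q → AH A h) (φs : Fin 1 → AH A h), (∀ l, φs l ∈ K) →
          D2 A h η xs φs = 0) ↔
        (∀ xs : Fin (q + 1) → AH A h, (∃ i, xs i ∈ K) →
          η xs (fun i => i.elim0) = 0))) := by
  refine ⟨?_, ?_, ?_⟩
  · intro p q η hc hcl
    exact Statement16Aux.part1 K π hπK hπA hπι η hc hcl
  · intro p η hc
    exact Statement16Aux.part2 K π hπK hπA hπι η hc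
  · intro q η hc
    exact Statement16Aux.part3 K η hc
end
end
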